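/- arXiv:2302.05072 — 10 statements merged into one kernel-verified Lean document; each statement's English description precedes it below -/
import Mathlib

section
/- Let A00, A0, A1 be complete subalgebras of a complete Boolean algebra A with A00 ⊆ A0 and A00 ⊆ A1. The following are equivalent: (1) h_{A1}(a0) = h_{A00}(a0) for all a0 ∈ A0; (2) h_{A0}(a1) = h_{A00}(a1) for all a1 ∈ A1; (3) whenever a0 ∈ A0 and a1 ∈ A1 are nonzero and h_{A00}(a0) = h_{A00}(a1), then a0 ⊓ a1 ≠ ⊥. (When these equivalent conditions hold we say that projections in the diagram (A00; A0, A1; A) are correct.) -/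
/-- A complete subalgebra of a complete Boolean algebra `A`: a subset containing `⊥`,
closed under complementation and under suprema of arbitrary subsets. -/
structure CompleteSubalgebra {A : Type*} [CompleteBooleanAlgebra A] (S : Set A) : Prop where
  bot_mem : ⊥ ∈ S
  compl_mem : ∀ a ∈ S, aᶜ ∈ S
  sSup_mem : ∀ T ⊆ S, sSup T ∈ S

/-- The projection onto a complete subalgebra: `h_S(a) = sInf {s ∈ S : a ≤ s}`. -/
def projSub {A : Type*} [CompleteBooleanAlgebra A] (S : Set A) (a : A) : A :=
  sInf {s | s ∈ S ∧ a ≤ s}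

section Aux

variable {A : Type*} [CompleteBooleanAlgebra A] {S : Set A}

theorem CompleteSubalgebra.sInf_mem (hS : CompleteSubalgebra S) {T : Set A} (hT : T ⊆ S) :
    sInf T ∈ S := by
  have key : sInf T = (sSup (compl '' T))ᶜ := by
    apply le_antisymm
    · rw [le_compl_iff_disjoint_right, disjoint_sSup_iff]
      rintro x ⟨t, ht, rfl⟩
      rw [disjoint_compl_right_iff]
      exact sInf_le ht
    · apply le_sInf
      intro t ht
      rw [compl_le_iff_compl_le]
      exact le_sSup ⟨t, ht, rfl⟩
  rw [key]
  exact hS.compl_mem _ (hS.sSup_mem _ (by rintro x ⟨t, ht, rfl⟩; exact hS.compl_mem _ (hT ht)))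

theorem CompleteSubalgebra.inf_mem (hS : CompleteSubalgebra S) {a b : A}
    (ha : a ∈ S) (hb : b ∈ S) : a ⊓ b ∈ S := by
  have : a ⊓ b = sInf {a, b} := by simp
  rw [this]
  exact hS.sInf_mem (by rintro x (rfl | rfl) <;> assumption)

theorem CompleteSubalgebra.sup_mem (hS : CompleteSubalgebra S) {a b : A}
    (ha : a ∈ S) (hb : b ∈ S) : a ⊔ b ∈ S := by
  have : a ⊔ b = sSup {a, b} := by simp
  rw [this]
  exact hS.sSup_mem _ (by rintro x (rfl | rfl) <;> assumption)

theorem projSub_mem (hS : CompleteSubalgebra S) (a : A) : projSub S a ∈ S :=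
  hS.sInf_mem (fun _ hs => hs.1)

theorem le_projSub (a : A) : a ≤ projSub S a :=
  le_sInf fun _ hs => hs.2

theorem projSub_le {s : A} (hs : s ∈ S) {a : A} (h : a ≤ s) : projSub S a ≤ s :=
  sInf_le ⟨hs, h⟩

theorem projSub_le_iff {s : A} (hs : s ∈ S) {a : A} : projSub S a ≤ s ↔ a ≤ s :=
  ⟨fun h => (le_projSub a).trans h, projSub_le hs⟩

theorem projSub_mono (hS : CompleteSubalgebra S) {a b : A} (h : a ≤ b) :
    projSub S a ≤ projSub S b :=
  projSub_le (projSub_mem hS b) (h.trans (le_projSub b))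

theorem projSub_eq_self {s : A} (hs : s ∈ S) : projSub S s = s :=
  le_antisymm (projSub_le hs le_rfl) (le_projSub s)

theorem projSub_bot (hS : CompleteSubalgebra S) : projSub S (⊥ : A) = ⊥ :=
  le_bot_iff.mp (projSub_le hS.bot_mem le_rfl)

theorem projSub_ne_bot (hS : CompleteSubalgebra S) {a : A} (h : a ≠ ⊥) :
    projSub S a ≠ ⊥ := fun hb => h (le_bot_iff.mp (hb ▸ le_projSub a))

/-- `h_S(a ⊓ d) = h_S(a) ⊓ d` for `d ∈ S`. -/
theorem projSub_inf (hS : CompleteSubalgebra S) (a : A) {d : A} (hd : d ∈ S) :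
    projSub S (a ⊓ d) = projSub S a ⊓ d := by
  apply le_antisymm
  · exact projSub_le (hS.inf_mem (projSub_mem hS a) hd)
      (inf_le_inf_right d (le_projSub a))
  · have hmem : projSub S (a ⊓ d) ⊔ dᶜ ∈ S :=
      hS.sup_mem (projSub_mem hS _) (hS.compl_mem _ hd)
    have hle : a ≤ projSub S (a ⊓ d) ⊔ dᶜ := by
      have heq : a = a ⊓ d ⊔ a ⊓ dᶜ := by
        rw [← inf_sup_left, sup_compl_eq_top, inf_top_eq]
      calc a = a ⊓ d ⊔ a ⊓ dᶜ := heq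
        _ ≤ projSub S (a ⊓ d) ⊔ dᶜ := sup_le_sup (le_projSub _) inf_le_right
    have h1 : projSub S a ≤ projSub S (a ⊓ d) ⊔ dᶜ := projSub_le hmem hle
    calc projSub S a ⊓ d ≤ (projSub S (a ⊓ d) ⊔ dᶜ) ⊓ d := inf_le_inf_right d h1
      _ ≤ projSub S (a ⊓ d) := by
          rw [inf_sup_right, compl_inf_eq_bot, sup_bot_eq]
          exact inf_le_left

/-- Key disjointness transfer: for `s ∈ S`, `a ⊓ s = ⊥ ↔ h_S(a) ⊓ s = ⊥`. -/
theorem projSub_inf_eq_bot_iff (hS : CompleteSubalgebra S) {s : A} (hs : s ∈ S) (a : A) :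
    a ⊓ s = ⊥ ↔ projSub S a ⊓ s = ⊥ := by
  rw [← disjoint_iff, ← disjoint_iff, ← le_compl_iff_disjoint_right,
    ← le_compl_iff_disjoint_right]
  exact (projSub_le_iff (hS.compl_mem _ hs)).symm

theorem projSub_le_projSub_of_subset {A00 A1 : Set A} (h : A00 ⊆ A1) (a : A) :
    projSub A1 a ≤ projSub A00 a :=
  sInf_le_sInf (fun s hs => ⟨h hs.1, hs.2⟩)

/-- The key (asymmetric) equivalence (1) ↔ (3). -/
theorem one_iff_three {A00 A0 A1 : Set A}
    (h00 : CompleteSubalgebra A00) (h0 : CompleteSubalgebra A0)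
    (h1 : CompleteSubalgebra A1)
    (h00_0 : A00 ⊆ A0) (h00_1 : A00 ⊆ A1) :
    (∀ a0 ∈ A0, projSub A1 a0 = projSub A00 a0) ↔
      (∀ a0 ∈ A0, ∀ a1 ∈ A1, a0 ≠ ⊥ → a1 ≠ ⊥ →
        projSub A00 a0 = projSub A00 a1 → a0 ⊓ a1 ≠ ⊥) := by
  constructor
  · intro H a0 ha0 a1 ha1 hne0 hne1 heq hbot
    apply hne1
    have h2 : projSub A1 a0 ⊓ a1 = ⊥ := (projSub_inf_eq_bot_iff h1 ha1 a0).mp hbot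
    rw [H a0 ha0, heq] at h2
    have : a1 ≤ projSub A00 a1 := le_projSub a1
    rw [inf_eq_right.mpr this] at h2
    exact h2
  · intro H a0 ha0
    apply le_antisymm (projSub_le_projSub_of_subset h00_1 a0)
    by_contra hcon
    set b := projSub A00 a0 ⊓ (projSub A1 a0)ᶜ with hb_def
    have hbS : b ∈ A1 :=
      h1.inf_mem (h00_1 (projSub_mem h00 a0)) (h1.compl_mem _ (projSub_mem h1 a0))
    have hb_ne : b ≠ ⊥ := by
      intro hb
      apply hcon
      rwa [← disjoint_iff, disjoint_compl_right_iff] at hb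
    -- h00(b) ≤ h00(a0)
    have hble : projSub A00 b ≤ projSub A00 a0 := by
      have : b ≤ projSub A00 a0 := inf_le_left
      calc projSub A00 b ≤ projSub A00 (projSub A00 a0) := projSub_mono h00 this
        _ = projSub A00 a0 := projSub_eq_self (projSub_mem h00 a0)
    set a0' := a0 ⊓ projSub A00 b with ha0'_def
    have ha0'A0 : a0' ∈ A0 := h0.inf_mem ha0 (h00_0 (projSub_mem h00 b))
    have hproj : projSub A00 a0' = projSub A00 b := by
      rw [ha0'_def, projSub_inf h00 a0 (projSub_mem h00 b), inf_eq_right.mpr hble]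
    have ha0'_ne : a0' ≠ ⊥ := by
      intro h
      apply projSub_ne_bot h00 hb_ne
      rw [← hproj, h, projSub_bot h00]
    have key := H a0' ha0'A0 b hbS ha0'_ne hb_ne hproj
    apply key
    have : a0' ⊓ b ≤ a0 ⊓ (projSub A1 a0)ᶜ :=
      inf_le_inf inf_le_left inf_le_right
    have hdisj : a0 ⊓ (projSub A1 a0)ᶜ = ⊥ := by
      rw [← disjoint_iff, disjoint_compl_right_iff]
      exact le_projSub a0
    exact le_bot_iff.mp (hdisj ▸ this)

end Aux

theorem correctness_tfae {A : Type*} [CompleteBooleanAlgebra A]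
    (A00 A0 A1 : Set A)
    (h00 : CompleteSubalgebra A00) (h0 : CompleteSubalgebra A0)
    (h1 : CompleteSubalgebra A1)
    (h00_0 : A00 ⊆ A0) (h00_1 : A00 ⊆ A1) :
    List.TFAE
      [∀ a0 ∈ A0, projSub A1 a0 = projSub A00 a0,
       ∀ a1 ∈ A1, projSub A0 a1 = projSub A00 a1,
       ∀ a0 ∈ A0, ∀ a1 ∈ A1, a0 ≠ ⊥ → a1 ≠ ⊥ →
         projSub A00 a0 = projSub A00 a1 → a0 ⊓ a1 ≠ ⊥] := by
  tfae_have 1 ↔ 3 := one_iff_three h00 h0 h1 h00_0 h00_1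
  tfae_have 2 ↔ 3 := by
    rw [one_iff_three h00 h1 h0 h00_1 h00_0]
    constructor
    · intro H a0 ha0 a1 ha1 hne0 hne1 heq
      rw [inf_comm]
      exact H a1 ha1 a0 ha0 hne1 hne0 heq.symm
    · intro H a1 ha1 a0 ha0 hne1 hne0 heq
      rw [inf_comm]
      exact H a0 ha0 a1 ha1 hne0 hne1 heq.symm
  tfae_finish
end

section
/- Let ⟨I, ≤⟩ be a partial order satisfying (i)–(iv) and having no maximal element, and let L = WithTop I be obtained from I by adding a top element ℓ above all elements of I. Then the following are equivalent: (a) I satisfies conditions (v) and (vi); (b) L is a distributive lattice, i.e., every pair of elements of L has a greatest lower bound and a least upper bound in L and the distributive law a ⊓ (b ⊔ c) = (a ⊓ b) ⊔ (a ⊓ c) holds for all a, b, c ∈ L (equivalently, L admits a DistribLattice structure whose underlying order is the given order). -/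
section Aux

variable {I : Type*} [PartialOrder I]

open Classical in
/-- Candidate sup on `WithTop I`. -/
noncomputable def auxSup (join : I → I → I) (a b : WithTop I) : WithTop I :=
  WithTop.recTopCoe ⊤
    (fun i => WithTop.recTopCoe ⊤
      (fun j => if ∃ u : I, i ≤ u ∧ j ≤ u then (↑(join i j) : WithTop I) else ⊤) b) a

/-- Candidate inf on `WithTop I`. -/
def auxInf (meet : I → I → I) (a b : WithTop I) : WithTop I :=
  WithTop.recTopCoe b
    (fun i => WithTop.recTopCoe (↑i) (fun j => (↑(meet i j) : WithTop I)) b) a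

variable (meet join : I → I → I)

theorem auxSup_top_left (b : WithTop I) : auxSup join ⊤ b = ⊤ := rfl
theorem auxSup_coe_top (i : I) : auxSup join (↑i) ⊤ = ⊤ := rfl
open Classical in
theorem auxSup_pos {i j : I} (h : ∃ u : I, i ≤ u ∧ j ≤ u) :
    auxSup join (↑i) (↑j) = ↑(join i j) := if_pos h
open Classical in
theorem auxSup_neg {i j : I} (h : ¬∃ u : I, i ≤ u ∧ j ≤ u) :
    auxSup join (↑i) (↑j) = ⊤ := if_neg h

theorem auxInf_top_left (b : WithTop I) : auxInf meet ⊤ b = b := rfl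
theorem auxInf_coe_top (i : I) : auxInf meet (↑i) ⊤ = ↑i := rfl
theorem auxInf_coe_coe (i j : I) : auxInf meet (↑i) (↑j) = ↑(meet i j) := rfl

end Aux

/-- A partial order satisfying (i)–(iv) with no maximal element satisfies (v) and (vi)
iff adding a top element yields a distributive lattice. -/
theorem conds_v_vi_iff_withTop_distribLattice
    {I : Type*} [PartialOrder I]
    (meet join : I → I → I)
    -- (i): `meet i j` is the greatest lower bound of `i` and `j`
    (hmeet : ∀ i j : I, IsGLB {i, j} (meet i j))
    -- (ii): if `i`, `j` have a common upper bound, `join i j` is their least upper bound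
    (hjoin : ∀ i j : I, (∃ u, i ≤ u ∧ j ≤ u) → IsLUB {i, j} (join i j))
    -- (iii): among any three elements, two have a common upper bound
    (hthree : ∀ i j k : I,
      (∃ u, i ≤ u ∧ j ≤ u) ∨ (∃ u, i ≤ u ∧ k ≤ u) ∨ (∃ u, j ≤ u ∧ k ≤ u))
    -- (iv): the distributive laws hold whenever both sides exist
    (hdistrib1 : ∀ i j k : I, (∃ u, j ≤ u ∧ k ≤ u) →
      meet i (join j k) = join (meet i j) (meet i k))
    (hdistrib2 : ∀ i j k : I, (∃ u, i ≤ u ∧ j ≤ u) → (∃ u, i ≤ u ∧ k ≤ u) →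
      join i (meet j k) = meet (join i j) (join i k))
    -- `I` has no maximal element
    (hnomax : ∀ i : I, ∃ j : I, i < j) :
    -- (a): conditions (v) and (vi)
    ((∀ i j j' : I, ¬(∃ u, i ≤ u ∧ j ≤ u) →
        ((¬(∃ u, i ≤ u ∧ j' ≤ u) ∧ ¬(∃ u, i ≤ u ∧ meet j j' ≤ u)) ∨
          join i j' = join i (meet j j')) ) ∧
     (∀ i j j' : I, ¬(∃ u, j ≤ u ∧ j' ≤ u) → join (meet i j) (meet i j') = i))
    ↔
    -- (b): `WithTop I` admits a distributive lattice structure with the given order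
    (∃ inst : DistribLattice (WithTop I),
      ∀ a b : WithTop I,
        @LE.le (WithTop I)
          (@Preorder.toLE _ (@PartialOrder.toPreorder _
            (@SemilatticeInf.toPartialOrder _ (@Lattice.toSemilatticeInf _
              (@DistribLattice.toLattice _ inst))))) a b ↔ a ≤ b) := by
  -- basic facts about meet and join
  have mle1 : ∀ i j : I, meet i j ≤ i := fun i j => (hmeet i j).1 (by simp)
  have mle2 : ∀ i j : I, meet i j ≤ j := fun i j => (hmeet i j).1 (by simp)
  have mge : ∀ i j k : I, k ≤ i → k ≤ j → k ≤ meet i j := fun i j k h1 h2 =>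
    (hmeet i j).2 (by
      intro x hx
      simp only [Set.mem_insert_iff, Set.mem_singleton_iff] at hx
      rcases hx with rfl | rfl <;> assumption)
  have jge1 : ∀ i j : I, (∃ u, i ≤ u ∧ j ≤ u) → i ≤ join i j := fun i j h =>
    (hjoin i j h).1 (by simp)
  have jge2 : ∀ i j : I, (∃ u, i ≤ u ∧ j ≤ u) → j ≤ join i j := fun i j h =>
    (hjoin i j h).1 (by simp)
  have jle : ∀ i j k : I, (∃ u, i ≤ u ∧ j ≤ u) → i ≤ k → j ≤ k → join i j ≤ k :=
    fun i j k h h1 h2 => (hjoin i j h).2 (by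
      intro x hx
      simp only [Set.mem_insert_iff, Set.mem_singleton_iff] at hx
      rcases hx with rfl | rfl <;> assumption)
  constructor
  · rintro ⟨hv, hvi⟩
    letI instL : Lattice (WithTop I) :=
      { (inferInstance : PartialOrder (WithTop I)) with
        sup := auxSup join
        inf := auxInf meet
        le_sup_left := by
          intro a b
          induction a using WithTop.recTopCoe with
          | top =>
            rw [auxSup_top_left]
          | coe i =>
            induction b using WithTop.recTopCoe with
            | top => exact le_top
            | coe j =>
              by_cases h : ∃ u : I, i ≤ u ∧ j ≤ u
              · rw [auxSup_pos join h]
                exact WithTop.coe_le_coe.mpr (jge1 i j h)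
              · rw [auxSup_neg join h]
                exact le_top
        le_sup_right := by
          intro a b
          induction a using WithTop.recTopCoe with
          | top =>
            rw [auxSup_top_left]
            exact le_top
          | coe i =>
            induction b using WithTop.recTopCoe with
            | top => rw [auxSup_coe_top]
            | coe j =>
              by_cases h : ∃ u : I, i ≤ u ∧ j ≤ u
              · rw [auxSup_pos join h]
                exact WithTop.coe_le_coe.mpr (jge2 i j h)
              · rw [auxSup_neg join h]
                exact le_top
        sup_le := by
          intro a b c h1 h2
          induction a using WithTop.recTopCoe with
          | top =>
            rw [top_le_iff] at h1
            subst h1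
            exact le_top
          | coe i =>
            induction b using WithTop.recTopCoe with
            | top =>
              rw [top_le_iff] at h2
              subst h2
              exact le_top
            | coe j =>
              induction c using WithTop.recTopCoe with
              | top => exact le_top
              | coe k =>
                rw [WithTop.coe_le_coe] at h1 h2
                have h : ∃ u : I, i ≤ u ∧ j ≤ u := ⟨k, h1, h2⟩
                rw [auxSup_pos join h]
                exact WithTop.coe_le_coe.mpr (jle i j k h h1 h2)
        inf_le_left := by
          intro a b
          induction a using WithTop.recTopCoe with
          | top =>
            rw [auxInf_top_left]
            exact le_top
          | coe i =>
            induction b using WithTop.recTopCoe with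
            | top => rw [auxInf_coe_top]
            | coe j =>
              rw [auxInf_coe_coe]
              exact WithTop.coe_le_coe.mpr (mle1 i j)
        inf_le_right := by
          intro a b
          induction a using WithTop.recTopCoe with
          | top =>
            rw [auxInf_top_left]
          | coe i =>
            induction b using WithTop.recTopCoe with
            | top => exact le_top
            | coe j =>
              rw [auxInf_coe_coe]
              exact WithTop.coe_le_coe.mpr (mle2 i j)
        le_inf := by
          intro c a b h1 h2
          induction a using WithTop.recTopCoe with
          | top =>
            rw [auxInf_top_left]
            exact h2
          | coe i =>
            induction b using WithTop.recTopCoe with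
            | top =>
              rw [auxInf_coe_top]
              exact h1
            | coe j =>
              induction c using WithTop.recTopCoe with
              | top =>
                rw [top_le_iff] at h1
                exact absurd h1 (WithTop.coe_ne_top)
              | coe k =>
                rw [WithTop.coe_le_coe] at h1 h2
                rw [auxInf_coe_coe]
                exact WithTop.coe_le_coe.mpr (mge i j k h1 h2) }
    refine ⟨DistribLattice.ofInfSupLe ?_, fun a b => Iff.rfl⟩
    intro a b c
    show auxInf meet a (auxSup join b c) ≤ auxSup join (auxInf meet a b) (auxInf meet a c)
    induction a using WithTop.recTopCoe with
    | top =>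
      rw [auxInf_top_left, auxInf_top_left, auxInf_top_left]
    | coe i =>
      induction b using WithTop.recTopCoe with
      | top =>
        rw [auxSup_top_left, auxInf_coe_top]
        induction c using WithTop.recTopCoe with
        | top =>
          rw [auxInf_coe_top]
          have h : ∃ u : I, i ≤ u ∧ i ≤ u := ⟨i, le_rfl, le_rfl⟩
          rw [auxSup_pos join h]
          exact WithTop.coe_le_coe.mpr (jge1 i i h)
        | coe j =>
          rw [auxInf_coe_coe]
          have h : ∃ u : I, i ≤ u ∧ meet i j ≤ u := ⟨i, le_rfl, mle1 i j⟩
          rw [auxSup_pos join h]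
          exact WithTop.coe_le_coe.mpr (jge1 i (meet i j) h)
      | coe j =>
        induction c using WithTop.recTopCoe with
        | top =>
          rw [auxSup_coe_top, auxInf_coe_top, auxInf_coe_coe]
          have h : ∃ u : I, meet i j ≤ u ∧ i ≤ u := ⟨i, mle1 i j, le_rfl⟩
          rw [auxSup_pos join h]
          exact WithTop.coe_le_coe.mpr (jge2 (meet i j) i h)
        | coe j' =>
          rw [auxInf_coe_coe, auxInf_coe_coe]
          have hub : ∃ u : I, meet i j ≤ u ∧ meet i j' ≤ u := ⟨i, mle1 i j, mle1 i j'⟩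
          rw [auxSup_pos join hub]
          by_cases hb : ∃ u : I, j ≤ u ∧ j' ≤ u
          · rw [auxSup_pos join hb, auxInf_coe_coe]
            exact le_of_eq (congrArg _ (hdistrib1 i j j' hb))
          · rw [auxSup_neg join hb, auxInf_coe_top]
            exact le_of_eq (congrArg _ (hvi i j j' hb)).symm
  · rintro ⟨inst, hle⟩
    have SS := inst.toLattice.toSemilatticeSup
    have SI := inst.toLattice.toSemilatticeInf
    have f1 : ∀ a b : WithTop I, a ≤ inst.sup a b := fun a b =>
      (hle _ _).1 (@le_sup_left _ inst.toLattice.toSemilatticeSup a b)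
    have f2 : ∀ a b : WithTop I, b ≤ inst.sup a b := fun a b =>
      (hle _ _).1 (@le_sup_right _ inst.toLattice.toSemilatticeSup a b)
    have f3 : ∀ a b c : WithTop I, a ≤ c → b ≤ c → inst.sup a b ≤ c := fun a b c h1 h2 =>
      (hle _ _).1 (@sup_le _ inst.toLattice.toSemilatticeSup a b c
        ((hle _ _).2 h1) ((hle _ _).2 h2))
    have g1 : ∀ a b : WithTop I, inst.inf a b ≤ a := fun a b =>
      (hle _ _).1 (@inf_le_left _ inst.toLattice.toSemilatticeInf a b)
    have g2 : ∀ a b : WithTop I, inst.inf a b ≤ b := fun a b =>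
      (hle _ _).1 (@inf_le_right _ inst.toLattice.toSemilatticeInf a b)
    have g3 : ∀ a b c : WithTop I, c ≤ a → c ≤ b → c ≤ inst.inf a b := fun a b c h1 h2 =>
      (hle _ _).1 (@le_inf _ inst.toLattice.toSemilatticeInf c a b
        ((hle _ _).2 h1) ((hle _ _).2 h2))
    -- computing the sup and inf on elements
    have hStop : ∀ i j : I, ¬(∃ u : I, i ≤ u ∧ j ≤ u) → inst.sup (↑i) (↑j) = ⊤ := by
      intro i j h
      by_contra hc
      obtain ⟨u, hu⟩ := WithTop.ne_top_iff_exists.mp hc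
      have h1 := f1 (↑i) (↑j)
      have h2 := f2 (↑i) (↑j)
      rw [← hu] at h1 h2
      exact h ⟨u, WithTop.coe_le_coe.mp h1, WithTop.coe_le_coe.mp h2⟩
    have hScoe : ∀ i j : I, (∃ u : I, i ≤ u ∧ j ≤ u) → inst.sup (↑i) (↑j) = ↑(join i j) := by
      intro i j h
      have h1 : inst.sup (↑i) (↑j) ≤ ↑(join i j) :=
        f3 _ _ _ (WithTop.coe_le_coe.mpr (jge1 i j h)) (WithTop.coe_le_coe.mpr (jge2 i j h))
      obtain ⟨s, hs, hsle⟩ := WithTop.le_coe_iff.mp h1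
      have hi : i ≤ s := WithTop.coe_le_coe.mp (hs ▸ f1 (↑i) (↑j))
      have hj : j ≤ s := WithTop.coe_le_coe.mp (hs ▸ f2 (↑i) (↑j))
      rw [hs, le_antisymm hsle (jle i j s h hi hj)]
    have hNcoe : ∀ i j : I, inst.inf (↑i) (↑j) = ↑(meet i j) := by
      intro i j
      have h1 : (↑(meet i j) : WithTop I) ≤ inst.inf (↑i) (↑j) :=
        g3 _ _ _ (WithTop.coe_le_coe.mpr (mle1 i j)) (WithTop.coe_le_coe.mpr (mle2 i j))
      obtain ⟨m, hm, hmle⟩ := WithTop.le_coe_iff.mp (g1 (↑i) (↑j))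
      have hj : m ≤ j := WithTop.coe_le_coe.mp (hm ▸ g2 (↑i) (↑j))
      have h2 : meet i j ≤ m := WithTop.coe_le_coe.mp (hm ▸ h1)
      rw [hm, le_antisymm h2 (mge i j m hmle hj)]
    have hNtop : ∀ a : WithTop I, inst.inf ⊤ a = a := fun a =>
      le_antisymm (g2 ⊤ a) (g3 ⊤ a a le_top le_rfl)
    have hNtop' : ∀ a : WithTop I, inst.inf a ⊤ = a := fun a =>
      le_antisymm (g1 a ⊤) (g3 a ⊤ a le_rfl le_top)
    -- the two distributive laws of `inst`
    have dsup : ∀ a b c : WithTop I, inst.sup a (inst.inf b c)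
        = inst.inf (inst.sup a b) (inst.sup a c) := fun a b c => @sup_inf_left _ inst a b c
    have dinf : ∀ a b c : WithTop I, inst.inf a (inst.sup b c)
        = inst.sup (inst.inf a b) (inst.inf a c) := fun a b c => @inf_sup_left _ inst a b c
    constructor
    · -- condition (v)
      intro i j j' hnub
      have e : inst.sup (↑i) (↑(meet j j')) = inst.sup (↑i) (↑j') := by
        have h := dsup (↑i) (↑j) (↑j')
        rw [hNcoe j j', hStop i j hnub, hNtop] at h
        exact h
      by_cases hij' : ∃ u : I, i ≤ u ∧ j' ≤ u
      · right
        rw [hScoe i j' hij'] at e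
        by_cases hm : ∃ u : I, i ≤ u ∧ meet j j' ≤ u
        · rw [hScoe i (meet j j') hm] at e
          exact (WithTop.coe_inj.mp e).symm
        · rw [hStop i (meet j j') hm] at e
          exact absurd e.symm WithTop.coe_ne_top
      · left
        refine ⟨hij', fun hm => ?_⟩
        rw [hStop i j' hij', hScoe i (meet j j') hm] at e
        exact absurd e WithTop.coe_ne_top
    · -- condition (vi)
      intro i j j' hnub
      have e := dinf (↑i) (↑j) (↑j')
      rw [hStop j j' hnub, hNtop', hNcoe i j, hNcoe i j'] at e
      have hub : ∃ u : I, meet i j ≤ u ∧ meet i j' ≤ u := ⟨i, mle1 i j, mle1 i j'⟩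
      rw [hScoe _ _ hub] at e
      exact (WithTop.coe_inj.mp e).symm
end

section
/- Let I be a distributive almost-lattice. For every finite subset F ⊆ I, the closure of F, i.e., the smallest closed subset of I containing F, is finite. -/
/-- A distributive almost-lattice: a partial order where any two elements have a meet,
any two elements with a common upper bound have a join, among any three elements two have
a common upper bound, the distributive laws hold whenever both sides exist, and
conditions (v) and (vi) hold. -/
structure DistribAlmostLattice (I : Type*) [PartialOrder I] where
  meet : I → I → I
  join : I → I → I
  /-- (i): `meet i j` is the greatest lower bound of `i` and `j` -/
  meet_isGLB : ∀ i j : I, IsGLB {i, j} (meet i j)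
  /-- (ii): if `i`, `j` have a common upper bound, `join i j` is their least upper bound -/
  join_isLUB : ∀ i j : I, (∃ u, i ≤ u ∧ j ≤ u) → IsLUB {i, j} (join i j)
  /-- (iii): among any three elements, two have a common upper bound -/
  two_of_three : ∀ i j k : I,
    (∃ u, i ≤ u ∧ j ≤ u) ∨ (∃ u, i ≤ u ∧ k ≤ u) ∨ (∃ u, j ≤ u ∧ k ≤ u)
  /-- (iv): distributivity of meet over join (whenever both sides exist) -/
  distrib_meet_join : ∀ i j k : I, (∃ u, j ≤ u ∧ k ≤ u) →
    meet i (join j k) = join (meet i j) (meet i k)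
  /-- (iv): distributivity of join over meet (whenever both sides exist) -/
  distrib_join_meet : ∀ i j k : I, (∃ u, i ≤ u ∧ j ≤ u) → (∃ u, i ≤ u ∧ k ≤ u) →
    join i (meet j k) = meet (join i j) (join i k)
  /-- (v) -/
  cond_v : ∀ i j j' : I, ¬(∃ u, i ≤ u ∧ j ≤ u) →
    ((¬(∃ u, i ≤ u ∧ j' ≤ u) ∧ ¬(∃ u, i ≤ u ∧ meet j j' ≤ u)) ∨
      join i j' = join i (meet j j'))
  /-- (vi) -/
  cond_vi : ∀ i j j' : I, ¬(∃ u, j ≤ u ∧ j' ≤ u) →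
    join (meet i j) (meet i j') = i

namespace DistribAlmostLattice

variable {I : Type*} [PartialOrder I] (L : DistribAlmostLattice I)

theorem meet_le_left (i j : I) : L.meet i j ≤ i :=
  (L.meet_isGLB i j).1 (Set.mem_insert _ _)

theorem meet_le_right (i j : I) : L.meet i j ≤ j :=
  (L.meet_isGLB i j).1 (Set.mem_insert_of_mem _ rfl)

theorem le_join_left (i j : I) (h : ∃ u, i ≤ u ∧ j ≤ u) : i ≤ L.join i j :=
  (L.join_isLUB i j h).1 (Set.mem_insert _ _)

theorem le_join_right (i j : I) (h : ∃ u, i ≤ u ∧ j ≤ u) : j ≤ L.join i j :=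
  (L.join_isLUB i j h).1 (Set.mem_insert_of_mem _ rfl)

end DistribAlmostLattice

namespace DistribAlmostLattice

variable {I : Type*} [PartialOrder I] (L : DistribAlmostLattice I)

theorem le_meet' {i j k : I} (h1 : k ≤ i) (h2 : k ≤ j) : k ≤ L.meet i j :=
  (L.meet_isGLB i j).2 (by rintro x (rfl | rfl) <;> assumption)

theorem meet_comm' (i j : I) : L.meet i j = L.meet j i :=
  (L.meet_isGLB i j).unique (by rw [Set.pair_comm]; exact L.meet_isGLB j i)

theorem isGLB_insert' {S : Set I} {y : I} (a : I) (h : IsGLB S y) :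
    IsGLB (insert a S) (L.meet a y) := by
  constructor
  · rintro x (rfl | hx)
    · exact L.meet_le_left x y
    · exact (L.meet_le_right a y).trans (h.1 hx)
  · intro z hz
    exact L.le_meet' (hz (Set.mem_insert a S))
      (h.2 fun x hx => hz (Set.mem_insert_of_mem _ hx))

theorem isLUB_insert' {S : Set I} {y : I} (a : I) (h : IsLUB S y)
    (hu : ∃ u, a ≤ u ∧ y ≤ u) : IsLUB (insert a S) (L.join a y) := by
  constructor
  · rintro x (rfl | hx)
    · exact L.le_join_left x y hu
    · exact (h.1 hx).trans (L.le_join_right a y hu)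
  · intro z hz
    refine (L.join_isLUB a y hu).2 ?_
    rintro x (rfl | rfl)
    · exact hz (Set.mem_insert x S)
    · exact h.2 fun w hw => hz (Set.mem_insert_of_mem _ hw)

include L in
theorem exists_isGLB' (S : Finset I) (hS : S.Nonempty) : ∃ x, IsGLB (↑S : Set I) x := by
  induction hS using Finset.Nonempty.cons_induction with
  | singleton a => exact ⟨a, by simpa using (isGLB_singleton : IsGLB ({a} : Set I) a)⟩
  | cons a S h hS ih =>
    obtain ⟨y, hy⟩ := ih
    exact ⟨L.meet a y, by simpa using L.isGLB_insert' a hy⟩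

include L in
theorem exists_isLUB' (S : Finset I) (hS : S.Nonempty) (u : I) :
    (∀ t ∈ S, t ≤ u) → ∃ x, IsLUB (↑S : Set I) x := by
  induction hS using Finset.Nonempty.cons_induction with
  | singleton a =>
    exact fun _ => ⟨a, by simpa using (isLUB_singleton : IsLUB ({a} : Set I) a)⟩
  | cons a S h hS ih =>
    intro hu
    obtain ⟨y, hy⟩ := ih fun t ht => hu t (Finset.mem_cons_of_mem ht)
    have hyu : y ≤ u := hy.2 fun t ht => hu t (Finset.mem_cons_of_mem ht)
    exact ⟨L.join a y, by
      simpa using L.isLUB_insert' a hy ⟨u, hu a (Finset.mem_cons_self a S), hyu⟩⟩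

theorem meet_isLUB_image' [DecidableEq I] (i : I) (T : Finset I) (hT : T.Nonempty) :
    ∀ x, IsLUB (↑T : Set I) x →
      IsLUB (↑(T.image (L.meet i)) : Set I) (L.meet i x) := by
  induction hT using Finset.Nonempty.cons_induction with
  | singleton a =>
    intro x hx
    have hxa : x = a := hx.unique (by simpa using (isLUB_singleton : IsLUB ({a} : Set I) a))
    subst hxa
    simpa using (isLUB_singleton : IsLUB ({L.meet i x} : Set I) (L.meet i x))
  | cons a S h hS ih =>
    intro x hx
    have hub : ∀ t ∈ S, t ≤ x := fun t ht => hx.1 (by simp [ht])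
    obtain ⟨y, hy⟩ := L.exists_isLUB' S hS x hub
    have hax : a ≤ x := hx.1 (by simp)
    have hyx : y ≤ x := hy.2 fun t ht => hub t ht
    have hcub : ∃ u, a ≤ u ∧ y ≤ u := ⟨x, hax, hyx⟩
    have hxj : x = L.join a y := hx.unique (by simpa using L.isLUB_insert' a hy hcub)
    have hd : L.meet i x = L.join (L.meet i a) (L.meet i y) := by
      rw [hxj]; exact L.distrib_meet_join i a y hcub
    rw [hd]
    have := L.isLUB_insert' (L.meet i a) (ih y hy)
      ⟨i, L.meet_le_left _ _, L.meet_le_left _ _⟩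
    simpa [Finset.cons_eq_insert, Finset.image_insert] using this

end DistribAlmostLattice

/-- A subset `F` of a distributive almost-lattice is closed if it is closed under meets
and under joins whenever they exist. -/
def IsClosedSubset {I : Type*} [PartialOrder I] (L : DistribAlmostLattice I)
    (F : Set I) : Prop :=
  ∀ i ∈ F, ∀ j ∈ F, L.meet i j ∈ F ∧ ((∃ u, i ≤ u ∧ j ≤ u) → L.join i j ∈ F)

/-- The closure of a finite subset of a distributive almost-lattice is finite. -/
theorem closure_of_finite_finite {I : Type*} [PartialOrder I]
    (L : DistribAlmostLattice I) (F : Set I) (hF : F.Finite) :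
    (⋂₀ {C : Set I | IsClosedSubset L C ∧ F ⊆ C}).Finite := by
  classical
  set M : Set I := {x | ∃ S : Finset I, S.Nonempty ∧ ↑S ⊆ F ∧ IsGLB (↑S : Set I) x} with hMdef
  have hMfin : M.Finite := by
    have hsub : M ⊆ ⋃ S ∈ hF.toFinset.powerset, {x | IsGLB (↑S : Set I) x} := by
      rintro x ⟨S, hSne, hSF, hglb⟩
      exact Set.mem_biUnion
        (Finset.mem_powerset.2 fun t ht => hF.mem_toFinset.2 (hSF ht)) hglb
    exact (Set.Finite.biUnion hF.toFinset.powerset.finite_toSet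
      (fun S _ => Set.Subsingleton.finite fun a ha b hb => ha.unique hb)).subset hsub
  set G : Set I := {x | ∃ T : Finset I, T.Nonempty ∧ ↑T ⊆ M ∧ IsLUB (↑T : Set I) x} with hGdef
  have hGfin : G.Finite := by
    have hsub : G ⊆ ⋃ T ∈ hMfin.toFinset.powerset, {x | IsLUB (↑T : Set I) x} := by
      rintro x ⟨T, hTne, hTM, hlub⟩
      exact Set.mem_biUnion
        (Finset.mem_powerset.2 fun t ht => hMfin.mem_toFinset.2 (hTM ht)) hlub
    exact (Set.Finite.biUnion hMfin.toFinset.powerset.finite_toSet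
      (fun T _ => Set.Subsingleton.finite fun a ha b hb => ha.unique hb)).subset hsub
  have hFM : F ⊆ M := fun x hx =>
    ⟨{x}, Finset.singleton_nonempty x, by simpa using hx, by
      simpa using (isGLB_singleton : IsGLB ({x} : Set I) x)⟩
  have hFG : F ⊆ G := fun x hx =>
    ⟨{x}, Finset.singleton_nonempty x, by simpa using hFM hx, by
      simpa using (isLUB_singleton : IsLUB ({x} : Set I) x)⟩
  have hMmeet : ∀ a ∈ M, ∀ b ∈ M, L.meet a b ∈ M := by
    rintro a ⟨S, hSne, hSF, hSglb⟩ b ⟨S', hS'ne, hS'F, hS'glb⟩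
    refine ⟨S ∪ S', hSne.mono Finset.subset_union_left, ?_, ?_⟩
    · intro t ht
      rcases Finset.mem_union.1 ht with h | h
      · exact hSF h
      · exact hS'F h
    · rw [Finset.coe_union]
      constructor
      · rintro x (hx | hx)
        · exact (L.meet_le_left a b).trans (hSglb.1 hx)
        · exact (L.meet_le_right a b).trans (hS'glb.1 hx)
      · intro z hz
        exact L.le_meet' (hSglb.2 fun t ht => hz (Or.inl ht))
          (hS'glb.2 fun t ht => hz (Or.inr ht))
  have hGclosed : IsClosedSubset L G := by
    rintro x ⟨T, hTne, hTM, hTlub⟩ y ⟨T', hT'ne, hT'M, hT'lub⟩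
    constructor
    · -- meet
      refine ⟨(T ×ˢ T').image fun p => L.meet p.1 p.2,
        (hTne.product hT'ne).image _, ?_, ?_, ?_⟩
      · rintro w hw
        simp only [Finset.coe_image, Set.mem_image, Finset.mem_coe,
          Finset.mem_product] at hw
        obtain ⟨⟨a, b⟩, ⟨ha, hb⟩, rfl⟩ := hw
        exact hMmeet a (hTM ha) b (hT'M hb)
      · -- upper bound
        rintro w hw
        simp only [Finset.coe_image, Set.mem_image, Finset.mem_coe,
          Finset.mem_product] at hw
        obtain ⟨⟨a, b⟩, ⟨ha, hb⟩, rfl⟩ := hw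
        exact L.le_meet' ((L.meet_le_left a b).trans (hTlub.1 ha))
          ((L.meet_le_right a b).trans (hT'lub.1 hb))
      · -- least
        intro z hz
        refine (L.meet_isLUB_image' x T' hT'ne y hT'lub).2 ?_
        rintro w hw
        simp only [Finset.coe_image, Set.mem_image, Finset.mem_coe] at hw
        obtain ⟨b, hb, rfl⟩ := hw
        rw [L.meet_comm' x b]
        refine (L.meet_isLUB_image' b T hTne x hTlub).2 ?_
        rintro v hv
        simp only [Finset.coe_image, Set.mem_image, Finset.mem_coe] at hv
        obtain ⟨a, ha, rfl⟩ := hv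
        rw [L.meet_comm' b a]
        refine hz ?_
        simp only [Finset.coe_image, Set.mem_image, Finset.mem_coe,
          Finset.mem_product]
        exact ⟨(a, b), ⟨ha, hb⟩, rfl⟩
    · -- join
      intro hcub
      refine ⟨T ∪ T', hTne.mono Finset.subset_union_left, ?_, ?_⟩
      · intro t ht
        rcases Finset.mem_union.1 ht with h | h
        · exact hTM h
        · exact hT'M h
      · rw [Finset.coe_union]
        constructor
        · rintro w (hw | hw)
          · exact (hTlub.1 hw).trans (L.le_join_left x y hcub)
          · exact (hT'lub.1 hw).trans (L.le_join_right x y hcub)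
        · intro z hz
          refine (L.join_isLUB x y hcub).2 ?_
          rintro w (rfl | rfl)
          · exact hTlub.2 fun t ht => hz (Or.inl ht)
          · exact hT'lub.2 fun t ht => hz (Or.inr ht)
  exact hGfin.subset (Set.sInter_subset_of_mem ⟨hGclosed, hFG⟩)
end

section
/- Let I be a distributive almost-lattice and let F ⊆ I be finite, nonempty and closed. Then either F has a greatest element j0 (i.e., f ≤ j0 for all f ∈ F), or there exist two elements j0, j1 ∈ F which have no common upper bound in I and such that every f ∈ F satisfies f ≤ j0 or f ≤ j1. -/
/-- A finite nonempty closed subset of a distributive almost-lattice either has a greatest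
element, or has two top elements without common upper bound below one of which every
element lies. -/
theorem closed_finite_top_elements {I : Type*} [PartialOrder I]
    (L : DistribAlmostLattice I) (F : Set I) (hfin : F.Finite) (hne : F.Nonempty)
    (hclosed : IsClosedSubset L F) :
    (∃ j0 ∈ F, ∀ f ∈ F, f ≤ j0) ∨
    (∃ j0 ∈ F, ∃ j1 ∈ F, ¬(∃ u, j0 ≤ u ∧ j1 ≤ u) ∧ ∀ f ∈ F, f ≤ j0 ∨ f ≤ j1) := by
  classical
  -- every element of F lies below a maximal element of F
  have hmax : ∀ f ∈ F, ∃ m ∈ F, f ≤ m ∧ ∀ x ∈ F, m ≤ x → m = x := by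
    intro f hf
    obtain ⟨m, hm, hmx0⟩ := (hfin.subset (Set.sep_subset F (f ≤ ·))).exists_maximalFor
      id {x ∈ F | f ≤ x} ⟨f, hf, le_rfl⟩
    have hmx : ∀ x ∈ {x ∈ F | f ≤ x}, m ≤ x → m = x :=
      fun x hx hle => le_antisymm hle (hmx0 hx hle)
    exact ⟨m, hm.1, hm.2, fun x hx hle => hmx x ⟨hx, hm.2.trans hle⟩ hle⟩
  -- if m is maximal and f ∈ F has a common upper bound with m, then f ≤ m
  have key : ∀ m ∈ F, (∀ x ∈ F, m ≤ x → m = x) → ∀ f ∈ F,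
      (∃ u, m ≤ u ∧ f ≤ u) → f ≤ m := by
    intro m hm hmmax f hf hub
    have hj := (hclosed m hm f hf).2 hub
    have := hmmax _ hj (L.le_join_left m f hub)
    exact this ▸ L.le_join_right m f hub
  by_cases hc : ∃ j0 ∈ F, ∃ j1 ∈ F, (∀ x ∈ F, j0 ≤ x → j0 = x) ∧
      (∀ x ∈ F, j1 ≤ x → j1 = x) ∧ ¬(∃ u, j0 ≤ u ∧ j1 ≤ u)
  · obtain ⟨j0, hj0, j1, hj1, hm0, hm1, hncub⟩ := hc
    refine Or.inr ⟨j0, hj0, j1, hj1, hncub, fun f hf => ?_⟩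
    rcases L.two_of_three j0 j1 f with h | h | h
    · exact absurd h hncub
    · exact Or.inl (key j0 hj0 hm0 f hf h)
    · exact Or.inr (key j1 hj1 hm1 f hf h)
  · push_neg at hc
    obtain ⟨f0, hf0⟩ := hne
    obtain ⟨j0, hj0, _, hm0⟩ := hmax f0 hf0
    refine Or.inl ⟨j0, hj0, fun f hf => ?_⟩
    obtain ⟨m, hm, hfm, hmm⟩ := hmax f hf
    have hub := hc j0 hj0 m hm hm0 hmm
    exact hfm.trans (key j0 hj0 hm0 m hm hub)
end

section
/- Let β and δ be ordinals. The set I = {(α, γ) : α ≤ β, γ ≤ δ, and (α < β or γ < δ)} of pairs of ordinals, ordered componentwise ((α, γ) ≤ (α', γ') iff α ≤ α' and γ ≤ γ'), is a distributive almost-lattice. -/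
section OPAux

variable (β δ : Ordinal)

/-- The type of pairs in question. -/
abbrev OP := {p : Ordinal × Ordinal // p.1 ≤ β ∧ p.2 ≤ δ ∧ (p.1 < β ∨ p.2 < δ)}

variable {β δ}

theorem op_le_def {i j : OP β δ} : i ≤ j ↔ i.1.1 ≤ j.1.1 ∧ i.1.2 ≤ j.1.2 := Iff.rfl

/-- Componentwise min, as an element of `OP`. -/
noncomputable def opMeet (i j : OP β δ) : OP β δ :=
  ⟨(min i.1.1 j.1.1, min i.1.2 j.1.2),
    (min_le_left _ _).trans i.2.1, (min_le_left _ _).trans i.2.2.1,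
    i.2.2.2.imp (lt_of_le_of_lt (min_le_left _ _)) (lt_of_le_of_lt (min_le_left _ _))⟩

/-- Componentwise max, as an element of `OP`, when it lies in `OP`; otherwise `i`. -/
noncomputable def opJoin (i j : OP β δ) : OP β δ :=
  if h : max i.1.1 j.1.1 < β ∨ max i.1.2 j.1.2 < δ then
    ⟨(max i.1.1 j.1.1, max i.1.2 j.1.2), max_le i.2.1 j.2.1, max_le i.2.2.1 j.2.2.1, h⟩
  else i

theorem op_hub_iff {i j : OP β δ} :
    (∃ u, i ≤ u ∧ j ≤ u) ↔ (max i.1.1 j.1.1 < β ∨ max i.1.2 j.1.2 < δ) := by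
  constructor
  · rintro ⟨u, hi, hj⟩
    rcases u.2.2.2 with h | h
    · exact Or.inl (lt_of_le_of_lt (max_le hi.1 hj.1) h)
    · exact Or.inr (lt_of_le_of_lt (max_le hi.2 hj.2) h)
  · intro h
    exact ⟨⟨(max i.1.1 j.1.1, max i.1.2 j.1.2),
      max_le i.2.1 j.2.1, max_le i.2.2.1 j.2.2.1, h⟩,
      ⟨le_max_left _ _, le_max_left _ _⟩, ⟨le_max_right _ _, le_max_right _ _⟩⟩

theorem opJoin_eq {i j : OP β δ} (h : ∃ u, i ≤ u ∧ j ≤ u) :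
    (opJoin i j).1 = (max i.1.1 j.1.1, max i.1.2 j.1.2) := by
  rw [opJoin, dif_pos (op_hub_iff.mp h)]

@[simp] theorem opMeet_val (i j : OP β δ) :
    (opMeet i j).1 = (min i.1.1 j.1.1, min i.1.2 j.1.2) := rfl

theorem op_no_hub {i j : OP β δ} (h : ¬∃ u, i ≤ u ∧ j ≤ u) :
    max i.1.1 j.1.1 = β ∧ max i.1.2 j.1.2 = δ := by
  rw [op_hub_iff] at h
  push_neg at h
  exact ⟨(max_le i.2.1 j.2.1).antisymm h.1, (max_le i.2.2.1 j.2.2.1).antisymm h.2⟩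

end OPAux

/-- The set `{(α, γ) : α ≤ β, γ ≤ δ, (α < β or γ < δ)}` of pairs of ordinals, ordered
componentwise, is a distributive almost-lattice. -/
theorem ordinal_pairs_distribAlmostLattice (β δ : Ordinal) :
    Nonempty (DistribAlmostLattice
      {p : Ordinal × Ordinal // p.1 ≤ β ∧ p.2 ≤ δ ∧ (p.1 < β ∨ p.2 < δ)}) := by
  refine ⟨{
    meet := opMeet
    join := opJoin
    meet_isGLB := ?_
    join_isLUB := ?_
    two_of_three := ?_
    distrib_meet_join := ?_
    distrib_join_meet := ?_
    cond_v := ?_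
    cond_vi := ?_ }⟩
  · -- meet_isGLB
    intro i j
    constructor
    · rintro x hx
      simp only [Set.mem_insert_iff, Set.mem_singleton_iff] at hx
      rcases hx with rfl | rfl
      · exact ⟨min_le_left _ _, min_le_left _ _⟩
      · exact ⟨min_le_right _ _, min_le_right _ _⟩
    · intro b hb
      have h1 := hb (Set.mem_insert _ _)
      have h2 := hb (Set.mem_insert_of_mem _ rfl)
      exact ⟨le_min h1.1 h2.1, le_min h1.2 h2.2⟩
  · -- join_isLUB
    intro i j h
    have he := opJoin_eq h
    constructor
    · rintro x hx
      simp only [Set.mem_insert_iff, Set.mem_singleton_iff] at hx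
      rcases hx with rfl | rfl
      · show x.1 ≤ (opJoin x j).1
        rw [he]; exact ⟨le_max_left _ _, le_max_left _ _⟩
      · show x.1 ≤ (opJoin i x).1
        rw [he]; exact ⟨le_max_right _ _, le_max_right _ _⟩
    · intro b hb
      have h1 := hb (Set.mem_insert _ _)
      have h2 := hb (Set.mem_insert_of_mem _ rfl)
      show (opJoin i j).1 ≤ b.1
      rw [he]
      exact ⟨max_le h1.1 h2.1, max_le h1.2 h2.2⟩
  · -- two_of_three
    intro i j k
    rcases i.2.2.2 with hi | hi <;> rcases j.2.2.2 with hj | hj <;>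
      rcases k.2.2.2 with hk | hk <;>
    first
      | exact Or.inl (op_hub_iff.mpr (Or.inl (max_lt hi hj)))
      | exact Or.inl (op_hub_iff.mpr (Or.inr (max_lt hi hj)))
      | exact Or.inr (Or.inl (op_hub_iff.mpr (Or.inl (max_lt hi hk))))
      | exact Or.inr (Or.inl (op_hub_iff.mpr (Or.inr (max_lt hi hk))))
      | exact Or.inr (Or.inr (op_hub_iff.mpr (Or.inl (max_lt hj hk))))
      | exact Or.inr (Or.inr (op_hub_iff.mpr (Or.inr (max_lt hj hk))))
  · -- distrib_meet_join
    intro i j k h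
    have h2 : ∃ u, opMeet i j ≤ u ∧ opMeet i k ≤ u :=
      ⟨i, ⟨min_le_left _ _, min_le_left _ _⟩, ⟨min_le_left _ _, min_le_left _ _⟩⟩
    apply Subtype.ext
    have e1 := opJoin_eq h
    have e2 := opJoin_eq h2
    rw [e2]
    simp only [opMeet_val, e1, Prod.mk.injEq]
    exact ⟨min_max_distrib_left .., min_max_distrib_left ..⟩
  · -- distrib_join_meet
    intro i j k hj hk
    have h2 : ∃ u, i ≤ u ∧ opMeet j k ≤ u := by
      obtain ⟨u, hu1, hu2⟩ := hj
      exact ⟨u, hu1, le_trans ⟨min_le_left _ _, min_le_left _ _⟩ hu2⟩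
    apply Subtype.ext
    have e1 := opJoin_eq h2
    have e2 := opJoin_eq hj
    have e3 := opJoin_eq hk
    rw [e1]
    simp only [opMeet_val, e2, e3, Prod.mk.injEq]
    exact ⟨max_min_distrib_left .., max_min_distrib_left ..⟩
  · -- cond_v
    intro i j j' h
    have hm := op_no_hub h
    rcases i.2.2.2 with hi | hi
    · -- i.1.1 < β, so j.1.1 = β, j.1.2 < δ, i.1.2 = δ
      have hj1 : j.1.1 = β := by
        rcases j.2.1.lt_or_eq with h' | h'
        · exact absurd hm.1 (ne_of_lt (max_lt hi h'))
        · exact h'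
      have hj2 : j.1.2 < δ := j.2.2.2.resolve_left (by rw [hj1]; exact lt_irrefl β)
      have hi2 : i.1.2 = δ := by
        rcases i.2.2.1.lt_or_eq with h' | h'
        · exact absurd hm.2 (ne_of_lt (max_lt h' hj2))
        · exact h'
      by_cases hc : j'.1.1 < β
      · right
        have h1 : ∃ u, i ≤ u ∧ j' ≤ u := op_hub_iff.mpr (Or.inl (max_lt hi hc))
        have h2 : ∃ u, i ≤ u ∧ opMeet j j' ≤ u :=
          op_hub_iff.mpr (Or.inl (max_lt hi ((min_le_right _ _).trans_lt hc)))
        apply Subtype.ext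
        rw [opJoin_eq h1, opJoin_eq h2]
        simp only [opMeet_val, Prod.mk.injEq]
        constructor
        · rw [hj1, min_eq_right j'.2.1]
        · rw [hi2, max_eq_left j'.2.2.1,
            max_eq_left ((min_le_left _ _).trans j.2.2.1)]
      · left
        have hc' : j'.1.1 = β := j'.2.1.antisymm (not_lt.mp hc)
        constructor
        · rw [op_hub_iff]
          push_neg
          exact ⟨le_max_of_le_right hc'.ge, le_max_of_le_left hi2.ge⟩
        · rw [op_hub_iff]
          push_neg
          refine ⟨?_, le_max_of_le_left hi2.ge⟩
          simp only [opMeet_val]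
          exact le_max_of_le_right (le_min hj1.ge hc'.ge)
    · -- i.1.2 < δ, so j.1.2 = δ, j.1.1 < β, i.1.1 = β
      have hj2 : j.1.2 = δ := by
        rcases j.2.2.1.lt_or_eq with h' | h'
        · exact absurd hm.2 (ne_of_lt (max_lt hi h'))
        · exact h'
      have hj1 : j.1.1 < β := j.2.2.2.resolve_right (by rw [hj2]; exact lt_irrefl δ)
      have hi1 : i.1.1 = β := by
        rcases i.2.1.lt_or_eq with h' | h'
        · exact absurd hm.1 (ne_of_lt (max_lt h' hj1))
        · exact h'
      by_cases hc : j'.1.2 < δ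
      · right
        have h1 : ∃ u, i ≤ u ∧ j' ≤ u := op_hub_iff.mpr (Or.inr (max_lt hi hc))
        have h2 : ∃ u, i ≤ u ∧ opMeet j j' ≤ u :=
          op_hub_iff.mpr (Or.inr (max_lt hi ((min_le_right _ _).trans_lt hc)))
        apply Subtype.ext
        rw [opJoin_eq h1, opJoin_eq h2]
        simp only [opMeet_val, Prod.mk.injEq]
        constructor
        · rw [hi1, max_eq_left j'.2.1,
            max_eq_left ((min_le_left _ _).trans j.2.1)]
        · rw [hj2, min_eq_right j'.2.2.1]
      · left
        have hc' : j'.1.2 = δ := j'.2.2.1.antisymm (not_lt.mp hc)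
        constructor
        · rw [op_hub_iff]
          push_neg
          exact ⟨le_max_of_le_left hi1.ge, le_max_of_le_right hc'.ge⟩
        · rw [op_hub_iff]
          push_neg
          refine ⟨le_max_of_le_left hi1.ge, ?_⟩
          simp only [opMeet_val]
          exact le_max_of_le_right (le_min hj2.ge hc'.ge)
  · -- cond_vi
    intro i j j' h
    have hm := op_no_hub h
    have h2 : ∃ u, opMeet i j ≤ u ∧ opMeet i j' ≤ u :=
      ⟨i, ⟨min_le_left _ _, min_le_left _ _⟩, ⟨min_le_left _ _, min_le_left _ _⟩⟩
    apply Subtype.ext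
    rw [opJoin_eq h2]
    simp only [opMeet_val]
    rw [← min_max_distrib_left, ← min_max_distrib_left, hm.1, hm.2,
      min_eq_left i.2.1, min_eq_left i.2.2.1]
end

section
/- In the setting of a correct system of complete Boolean algebras over a distributive almost-lattice I, the relation ⊑ on the set D of amalgamated-limit conditions is reflexive and transitive (i.e., ⊑ is a preorder on D). -/
section CorrectSystem

variable {I : Type*} [PartialOrder I] (L : DistribAlmostLattice I)
variable (A : I → Type*) [∀ i, CompleteBooleanAlgebra (A i)]
variable (e : ∀ i j : I, i ≤ j → A i → A j)

/-- The projection `h_{ji} : 𝔸_j → 𝔸_i` for `i ≤ j`: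
`h_{ji}(a) = sInf {b ∈ 𝔸_i : a ≤ e_{ij}(b)}`. -/
def sysProj (i j : I) (hij : i ≤ j) (a : A j) : A i :=
  sInf {b : A i | a ≤ e i j hij b}

/-- `(i, j, p, q)` is an amalgamated-limit condition: `p`, `q` are nonzero and they
have the same projection to `𝔸_{i ∧ j}`. -/
def InD {i j : I} (p : A i) (q : A j) : Prop :=
  p ≠ ⊥ ∧ q ≠ ⊥ ∧
    sysProj A e (L.meet i j) i (L.meet_le_left i j) p =
      sysProj A e (L.meet i j) j (L.meet_le_right i j) q

/-- Auxiliary relation: `e_{i'∧i,i}(h_{i',i'∧i}(p')) ≤ p`. -/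
def ProjLe {i' i : I} (p' : A i') (p : A i) : Prop :=
  e (L.meet i' i) i (L.meet_le_right i' i)
    (sysProj A e (L.meet i' i) i' (L.meet_le_left i' i) p') ≤ p

/-- The ordering `⊑` on amalgamated-limit conditions:
`(i', j', p', q') ⊑ (i, j, p, q)`. -/
def Sqle {i j i' j' : I} (p' : A i') (q' : A j') (p : A i) (q : A j) : Prop :=
  (ProjLe L A e p' p ∧ ProjLe L A e q' q) ∨
  (ProjLe L A e q' p ∧ ProjLe L A e p' q) ∨
  (ProjLe L A e p' p ∧ ProjLe L A e p' q) ∨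
  (ProjLe L A e q' p ∧ ProjLe L A e q' q)

end CorrectSystem

/-- In a correct system of complete Boolean algebras over a distributive almost-lattice,
the relation `⊑` is reflexive and transitive on the set `D` of amalgamated-limit
conditions. -/
theorem sqle_refl_trans {I : Type*} [PartialOrder I] (L : DistribAlmostLattice I)
    (A : I → Type*) [∀ i, CompleteBooleanAlgebra (A i)]
    (e : ∀ i j : I, i ≤ j → A i → A j)
    -- the `e i j` are complete embeddings forming a commuting system
    (he_inj : ∀ i j : I, ∀ hij : i ≤ j, Function.Injective (e i j hij))
    (he_bot : ∀ i j : I, ∀ hij : i ≤ j, e i j hij ⊥ = ⊥)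
    (he_top : ∀ i j : I, ∀ hij : i ≤ j, e i j hij ⊤ = ⊤)
    (he_inf : ∀ i j : I, ∀ hij : i ≤ j, ∀ a b : A i,
      e i j hij (a ⊓ b) = e i j hij a ⊓ e i j hij b)
    (he_sup : ∀ i j : I, ∀ hij : i ≤ j, ∀ a b : A i,
      e i j hij (a ⊔ b) = e i j hij a ⊔ e i j hij b)
    (he_sSup : ∀ i j : I, ∀ hij : i ≤ j, ∀ S : Set (A i),
      e i j hij (sSup S) = sSup (e i j hij '' S))
    (he_id : ∀ i : I, ∀ hii : i ≤ i, ∀ a : A i, e i i hii a = a)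
    (he_comp : ∀ i j k : I, ∀ hij : i ≤ j, ∀ hjk : j ≤ k, ∀ a : A i,
      e j k hjk (e i j hij a) = e i k (hij.trans hjk) a)
    -- correctness: `h_{i∨j,j}(e_{i,i∨j}(a)) = e_{i∧j,j}(h_{i,i∧j}(a))`
    (hcorrect : ∀ i j : I, ∀ hub : ∃ u, i ≤ u ∧ j ≤ u, ∀ a : A i,
      sysProj A e j (L.join i j) (L.le_join_right i j hub)
          (e i (L.join i j) (L.le_join_left i j hub) a) =
        e (L.meet i j) j (L.meet_le_right i j)
          (sysProj A e (L.meet i j) i (L.meet_le_left i j) a)) :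
    -- reflexivity on `D`
    (∀ i j : I, ∀ p : A i, ∀ q : A j, InD L A e p q → Sqle L A e p q p q) ∧
    -- transitivity on `D`
    (∀ i j i' j' i'' j'' : I, ∀ p : A i, ∀ q : A j, ∀ p' : A i', ∀ q' : A j',
      ∀ p'' : A i'', ∀ q'' : A j'',
      InD L A e p q → InD L A e p' q' → InD L A e p'' q'' →
      Sqle L A e p'' q'' p' q' → Sqle L A e p' q' p q → Sqle L A e p'' q'' p q) := by
  classical
  -- basic almost-lattice facts
  have le_meet : ∀ {c i j : I}, c ≤ i → c ≤ j → c ≤ L.meet i j := by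
    intro c i j h1 h2
    refine (L.meet_isGLB i j).2 ?_
    intro x hx
    rcases hx with rfl | hx
    · exact h1
    · rcases hx with rfl
      exact h2
  have meet_assoc1 : ∀ k m l : I,
      L.meet (L.meet k m) (L.meet k l) = L.meet (L.meet k m) (L.meet m l) := by
    intro k m l
    have h1 : L.meet (L.meet k m) (L.meet k l) = L.meet (L.meet k m) l :=
      le_antisymm
        (le_meet (L.meet_le_left _ _) ((L.meet_le_right _ _).trans (L.meet_le_right k l)))
        (le_meet (L.meet_le_left _ _)
          (le_meet ((L.meet_le_left _ _).trans (L.meet_le_left k m)) (L.meet_le_right _ _)))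
    have h2 : L.meet (L.meet k m) (L.meet m l) = L.meet (L.meet k m) l :=
      le_antisymm
        (le_meet (L.meet_le_left _ _) ((L.meet_le_right _ _).trans (L.meet_le_right m l)))
        (le_meet (L.meet_le_left _ _)
          (le_meet ((L.meet_le_left _ _).trans (L.meet_le_right k m)) (L.meet_le_right _ _)))
    rw [h1, h2]
  -- embedding facts
  have e_mono : ∀ (i j : I) (hij : i ≤ j) (a b : A i), a ≤ b → e i j hij a ≤ e i j hij b := by
    intro i j hij a b hab
    have h := he_inf i j hij a b
    rw [inf_eq_left.2 hab] at h
    exact h.trans_le inf_le_right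
  have e_le_iff : ∀ (i j : I) (hij : i ≤ j) (a b : A i),
      e i j hij a ≤ e i j hij b ↔ a ≤ b := by
    intro i j hij a b
    constructor
    · intro h
      have h2 : e i j hij (a ⊓ b) = e i j hij a := by
        rw [he_inf i j hij a b]
        exact inf_eq_left.2 h
      exact inf_eq_left.1 (he_inj i j hij h2)
    · exact e_mono i j hij a b
  have e_compl : ∀ (i j : I) (hij : i ≤ j) (a : A i), e i j hij aᶜ = (e i j hij a)ᶜ := by
    intro i j hij a
    rw [eq_compl_iff_isCompl]
    constructor
    · rw [disjoint_iff, ← he_inf, inf_comm, inf_compl_eq_bot, he_bot]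
    · rw [codisjoint_iff, ← he_sup, compl_sup_eq_top, he_top]
  have e_sInf : ∀ (i j : I) (hij : i ≤ j) (S : Set (A i)),
      e i j hij (sInf S) = sInf (e i j hij '' S) := by
    intro i j hij S
    have h0 : sInf S = (sSup (Compl.compl '' S))ᶜ := by
      rw [← compl_sInf', compl_compl]
    rw [h0, e_compl, he_sSup, compl_sSup', ← Set.image_comp, ← Set.image_comp]
    congr 1
    refine Set.image_congr' (fun s => ?_)
    simp only [Function.comp_apply]
    rw [e_compl, compl_compl]
  -- projection facts
  have le_e_proj : ∀ (i j : I) (hij : i ≤ j) (a : A j),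
      a ≤ e i j hij (sysProj A e i j hij a) := by
    intro i j hij a
    unfold sysProj
    rw [e_sInf i j hij]
    refine le_sInf ?_
    rintro x ⟨b, hb, rfl⟩
    exact hb
  have proj_le_iff : ∀ (i j : I) (hij : i ≤ j) (a : A j) (b : A i),
      sysProj A e i j hij a ≤ b ↔ a ≤ e i j hij b := by
    intro i j hij a b
    constructor
    · intro h
      exact (le_e_proj i j hij a).trans (e_mono i j hij _ _ h)
    · intro h
      exact sInf_le h
  have proj_mono : ∀ (i j : I) (hij : i ≤ j) (a b : A j), a ≤ b →
      sysProj A e i j hij a ≤ sysProj A e i j hij b := by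
    intro i j hij a b h
    exact (proj_le_iff i j hij a _).2 (h.trans (le_e_proj i j hij b))
  have proj_e : ∀ (i j : I) (hij : i ≤ j) (b : A i),
      sysProj A e i j hij (e i j hij b) = b := by
    intro i j hij b
    refine le_antisymm ((proj_le_iff i j hij _ b).2 le_rfl) ?_
    exact (e_le_iff i j hij b _).1 (le_e_proj i j hij (e i j hij b))
  have proj_comp : ∀ (i j k : I) (hij : i ≤ j) (hjk : j ≤ k) (hik : i ≤ k) (a : A k),
      sysProj A e i j hij (sysProj A e j k hjk a) = sysProj A e i k hik a := by
    intro i j k hij hjk hik a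
    refine le_antisymm ?_ ?_
    · refine (proj_le_iff _ _ _ _ _).2 ?_
      refine (proj_le_iff _ _ _ _ _).2 ?_
      rw [he_comp]
      exact le_e_proj i k hik a
    · refine (proj_le_iff _ _ _ _ _).2 ?_
      have h1 := le_e_proj j k hjk a
      have h2 := e_mono j k hjk _ _ (le_e_proj i j hij (sysProj A e j k hjk a))
      have h3 := h1.trans h2
      rw [he_comp] at h3
      exact h3
  -- generalized correctness: projecting an embedded element
  have proj_embed : ∀ (i j k : I) (hik : i ≤ k) (hjk : j ≤ k) (b : A i),
      sysProj A e j k hjk (e i k hik b) =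
        e (L.meet i j) j (L.meet_le_right i j)
          (sysProj A e (L.meet i j) i (L.meet_le_left i j) b) := by
    intro i j k hik hjk b
    have hub : ∃ u, i ≤ u ∧ j ≤ u := ⟨k, hik, hjk⟩
    have hiv := L.le_join_left i j hub
    have hjv := L.le_join_right i j hub
    have hvk : L.join i j ≤ k := by
      refine (L.join_isLUB i j hub).2 ?_
      intro x hx
      rcases hx with rfl | hx
      · exact hik
      · rcases hx with rfl
        exact hjk
    have h1 : sysProj A e j k hjk (e i k hik b)
        = sysProj A e j (L.join i j) hjv (sysProj A e (L.join i j) k hvk (e i k hik b)) :=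
      (proj_comp j (L.join i j) k hjv hvk hjk _).symm
    have h2 : sysProj A e (L.join i j) k hvk (e i k hik b) = e i (L.join i j) hiv b := by
      have h3 := proj_e (L.join i j) k hvk (e i (L.join i j) hiv b)
      rw [he_comp] at h3
      exact h3
    rw [h1, h2]
    exact hcorrect i j hub b
  -- cast along an equality of indices
  have cast_lem : ∀ (w w' km l : I), w = w' → ∀ (hwl : w ≤ l) (hw'l : w' ≤ l)
      (hwk : w ≤ km) (hw'k : w' ≤ km) (d : A km),
      e w l hwl (sysProj A e w km hwk d) = e w' l hw'l (sysProj A e w' km hw'k d) := by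
    rintro w w' km l rfl hwl hw'l hwk hw'k d
    rfl
  -- transitivity of ProjLe
  have T : ∀ (k m l : I) (a : A k) (b : A m) (c : A l),
      ProjLe L A e a b → ProjLe L A e b c → ProjLe L A e a c := by
    intro k m l a b c h1 h2
    unfold ProjLe at h1 h2 ⊢
    have hd : a ≤ e (L.meet k m) k (L.meet_le_left k m)
        (sysProj A e (L.meet k m) k (L.meet_le_left k m) a) :=
      le_e_proj _ _ _ a
    generalize hD : sysProj A e (L.meet k m) k (L.meet_le_left k m) a = d at h1 hd
    have s2 : sysProj A e (L.meet k l) k (L.meet_le_left k l) a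
        ≤ sysProj A e (L.meet k l) k (L.meet_le_left k l)
            (e (L.meet k m) k (L.meet_le_left k m) d) :=
      proj_mono _ _ _ _ _ hd
    have s3 := proj_embed (L.meet k m) (L.meet k l) k (L.meet_le_left k m)
      (L.meet_le_left k l) d
    have left : e (L.meet k l) l (L.meet_le_right k l)
          (sysProj A e (L.meet k l) k (L.meet_le_left k l) a)
        ≤ e (L.meet k l) l (L.meet_le_right k l)
            (sysProj A e (L.meet k l) k (L.meet_le_left k l)
              (e (L.meet k m) k (L.meet_le_left k m) d)) :=
      e_mono _ _ _ _ _ s2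
    rw [s3, he_comp] at left
    have t1 : e (L.meet m l) l (L.meet_le_right m l)
        (sysProj A e (L.meet m l) m (L.meet_le_left m l)
          (e (L.meet k m) m (L.meet_le_right k m) d)) ≤ c :=
      le_trans (e_mono _ _ _ _ _ (proj_mono _ _ _ _ _ h1)) h2
    have s4 := proj_embed (L.meet k m) (L.meet m l) m (L.meet_le_right k m)
      (L.meet_le_left m l) d
    rw [s4, he_comp] at t1
    have hcast := cast_lem (L.meet (L.meet k m) (L.meet k l))
      (L.meet (L.meet k m) (L.meet m l)) (L.meet k m) l (meet_assoc1 k m l)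
      ((L.meet_le_right _ _).trans (L.meet_le_right k l))
      ((L.meet_le_right _ _).trans (L.meet_le_right m l))
      (L.meet_le_left _ _) (L.meet_le_left _ _) d
    exact le_trans left (le_trans (le_of_eq hcast) t1)
  -- reflexivity of ProjLe
  have R : ∀ (i : I) (p : A i), ProjLe L A e p p := by
    intro i p
    unfold ProjLe
    have hm : L.meet i i = i := le_antisymm (L.meet_le_left i i) (le_meet le_rfl le_rfl)
    have key : ∀ (w : I), w = i → ∀ (h1 : w ≤ i) (h2 : w ≤ i),
        e w i h1 (sysProj A e w i h2 p) ≤ p := by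
      rintro w rfl h1 h2
      rw [he_id]
      exact (proj_le_iff w w h2 p p).2 (he_id w h2 p).ge
    exact key (L.meet i i) hm (L.meet_le_right i i) (L.meet_le_left i i)
  refine ⟨?_, ?_⟩
  · intro i j p q _
    exact Or.inl ⟨R i p, R j q⟩
  · intro i j i' j' i'' j'' p q p' q' p'' q'' _ _ _ hs1 hs2
    unfold Sqle at hs1 hs2 ⊢
    rcases hs2 with ⟨g1, g2⟩ | ⟨g1, g2⟩ | ⟨g1, g2⟩ | ⟨g1, g2⟩
    · rcases hs1 with ⟨f1, f2⟩ | ⟨f1, f2⟩ | ⟨f1, f2⟩ | ⟨f1, f2⟩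
      · exact Or.inl ⟨T _ _ _ _ _ _ f1 g1, T _ _ _ _ _ _ f2 g2⟩
      · exact Or.inr (Or.inl ⟨T _ _ _ _ _ _ f1 g1, T _ _ _ _ _ _ f2 g2⟩)
      · exact Or.inr (Or.inr (Or.inl ⟨T _ _ _ _ _ _ f1 g1, T _ _ _ _ _ _ f2 g2⟩))
      · exact Or.inr (Or.inr (Or.inr ⟨T _ _ _ _ _ _ f1 g1, T _ _ _ _ _ _ f2 g2⟩))
    · rcases hs1 with ⟨f1, f2⟩ | ⟨f1, f2⟩ | ⟨f1, f2⟩ | ⟨f1, f2⟩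
      · exact Or.inr (Or.inl ⟨T _ _ _ _ _ _ f2 g1, T _ _ _ _ _ _ f1 g2⟩)
      · exact Or.inl ⟨T _ _ _ _ _ _ f2 g1, T _ _ _ _ _ _ f1 g2⟩
      · exact Or.inr (Or.inr (Or.inl ⟨T _ _ _ _ _ _ f2 g1, T _ _ _ _ _ _ f1 g2⟩))
      · exact Or.inr (Or.inr (Or.inr ⟨T _ _ _ _ _ _ f2 g1, T _ _ _ _ _ _ f1 g2⟩))
    · rcases hs1 with ⟨f1, f2⟩ | ⟨f1, f2⟩ | ⟨f1, f2⟩ | ⟨f1, f2⟩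
      · exact Or.inr (Or.inr (Or.inl ⟨T _ _ _ _ _ _ f1 g1, T _ _ _ _ _ _ f1 g2⟩))
      · exact Or.inr (Or.inr (Or.inr ⟨T _ _ _ _ _ _ f1 g1, T _ _ _ _ _ _ f1 g2⟩))
      · exact Or.inr (Or.inr (Or.inl ⟨T _ _ _ _ _ _ f1 g1, T _ _ _ _ _ _ f1 g2⟩))
      · exact Or.inr (Or.inr (Or.inr ⟨T _ _ _ _ _ _ f1 g1, T _ _ _ _ _ _ f1 g2⟩))
    · rcases hs1 with ⟨f1, f2⟩ | ⟨f1, f2⟩ | ⟨f1, f2⟩ | ⟨f1, f2⟩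
      · exact Or.inr (Or.inr (Or.inr ⟨T _ _ _ _ _ _ f2 g1, T _ _ _ _ _ _ f2 g2⟩))
      · exact Or.inr (Or.inr (Or.inl ⟨T _ _ _ _ _ _ f2 g1, T _ _ _ _ _ _ f2 g2⟩))
      · exact Or.inr (Or.inr (Or.inl ⟨T _ _ _ _ _ _ f2 g1, T _ _ _ _ _ _ f2 g2⟩))
      · exact Or.inr (Or.inr (Or.inr ⟨T _ _ _ _ _ _ f2 g1, T _ _ _ _ _ _ f2 g2⟩))
end

section
/- (Complete embeddability into the amalgamated limit.) In the setting of a correct system of complete Boolean algebras over a distributive almost-lattice I, fix i0 ∈ I. Then: (a) if p, p' ∈ 𝔸_{i0} are nonzero with p ⊓ p' = ⊥, then no element of D lies ⊑-below both (i0, i0, p, p) and (i0, i0, p', p'); and (b) for every maximal antichain M of 𝔸_{i0} (i.e., M ⊆ 𝔸_{i0} \ {⊥} with m ⊓ m' = ⊥ for distinct m, m' ∈ M and sSup M = ⊤) and every (i, j, p, q) ∈ D, there exist m ∈ M and (i'', j'', p'', q'') ∈ D with (i'', j'', p'', q'') ⊑ (i, j, p, q) and (i'', j'', p'', q'') ⊑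 (i0, i0, m, m). (This expresses that each 𝔸_{i0} completely embeds into the amalgamated limit, the completion of (D, ⊑).) -/
section Pair
variable {α β γ : Type*} [CompleteBooleanAlgebra α] [CompleteBooleanAlgebra β]
  [CompleteBooleanAlgebra γ]

/-- A complete embedding of complete Boolean algebras. -/
structure IsCE (f : α → β) : Prop where
  inj : Function.Injective f
  map_bot : f ⊥ = ⊥
  map_top : f ⊤ = ⊤
  map_inf : ∀ a b, f (a ⊓ b) = f a ⊓ f b
  map_sSup : ∀ S : Set α, f (sSup S) = sSup (f '' S)

/-- The projection associated to an embedding. -/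
def ceProj (f : α → β) (b : β) : α := sInf {a | b ≤ f a}

namespace IsCE

variable {f : α → β} {g : β → γ} (hf : IsCE f)
include hf

theorem mono {a b : α} (h : a ≤ b) : f a ≤ f b := by
  have h1 : f (a ⊓ b) = f a := by rw [inf_eq_left.mpr h]
  rw [hf.map_inf] at h1
  rw [← h1]; exact inf_le_right

theorem le_iff {a b : α} : f a ≤ f b ↔ a ≤ b := by
  constructor
  · intro h
    have h1 : f (a ⊓ b) = f a := by rw [hf.map_inf, inf_eq_left.mpr h]
    have h2 := hf.inj h1
    rw [← h2]; exact inf_le_right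
  · exact hf.mono

theorem map_compl (a : α) : f aᶜ = (f a)ᶜ := by
  have h1 : f a ⊓ f aᶜ = ⊥ := by rw [← hf.map_inf, inf_compl_eq_bot, hf.map_bot]
  have h2 : f a ⊔ f aᶜ = ⊤ := by
    have := hf.map_sSup {a, aᶜ}
    rw [Set.image_pair, sSup_pair, sSup_pair, sup_compl_eq_top, hf.map_top] at this
    exact this.symm
  exact ((IsCompl.of_eq h1 h2).compl_eq).symm

theorem eq_bot {a : α} (h : f a = ⊥) : a = ⊥ := hf.inj (h.trans hf.map_bot.symm)

theorem map_sup (a b : α) : f (a ⊔ b) = f a ⊔ f b := by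
  have := hf.map_sSup {a, b}
  rw [Set.image_pair, sSup_pair, sSup_pair] at this
  exact this

theorem le_map_proj (b : β) : b ≤ f (ceProj f b) := by
  set S : Set α := {a | b ≤ f a} with hS
  have hc : (f (sInf S))ᶜ = sSup (f '' (compl '' S)) := by
    rw [← hf.map_compl]
    rw [show (sInf S)ᶜ = sSup (compl '' S) by rw [compl_sInf, ← sSup_image]]
    exact hf.map_sSup _
  have hb : b ⊓ (f (sInf S))ᶜ = ⊥ := by
    rw [hc, inf_sSup_eq]
    simp only [iSup_eq_bot]
    rintro x ⟨y, ⟨a, ha, rfl⟩, rfl⟩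
    simp only [hf.map_compl]
    exact disjoint_iff.mp (Disjoint.mono_left ha disjoint_compl_right)
  have hd : b \ f (sInf S) = ⊥ := by rw [sdiff_eq]; exact hb
  exact sdiff_eq_bot_iff.mp hd

theorem proj_le_iff {b : β} {c : α} : ceProj f b ≤ c ↔ b ≤ f c := by
  constructor
  · intro h; exact (hf.le_map_proj b).trans (hf.mono h)
  · intro h; exact sInf_le h

theorem proj_mono {b b' : β} (h : b ≤ b') : ceProj f b ≤ ceProj f b' :=
  hf.proj_le_iff.mpr (h.trans (hf.le_map_proj b'))

theorem proj_map (a : α) : ceProj f (f a) = a :=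
  le_antisymm (hf.proj_le_iff.mpr le_rfl)
    (hf.le_iff.mp (hf.le_map_proj (f a)))

theorem proj_bot : ceProj f (⊥ : β) = ⊥ := le_bot_iff.mp (hf.proj_le_iff.mpr bot_le)

theorem proj_eq_bot_iff {b : β} : ceProj f b = ⊥ ↔ b = ⊥ := by
  constructor
  · intro h
    have := hf.le_map_proj b
    rw [h, hf.map_bot] at this
    exact le_bot_iff.mp this
  · rintro rfl; exact hf.proj_bot

theorem proj_sup (y y' : β) : ceProj f (y ⊔ y') = ceProj f y ⊔ ceProj f y' := by
  apply le_antisymm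
  · rw [hf.proj_le_iff, hf.map_sup]
    exact sup_le_sup (hf.le_map_proj y) (hf.le_map_proj y')
  · exact sup_le (hf.proj_mono le_sup_left) (hf.proj_mono le_sup_right)

theorem proj_frobenius (b : β) (a : α) : ceProj f (b ⊓ f a) = ceProj f b ⊓ a := by
  apply le_antisymm
  · refine le_inf (hf.proj_mono inf_le_left) ?_
    rw [hf.proj_le_iff]
    exact inf_le_right
  · have hsplit : b = (b ⊓ f a) ⊔ (b ⊓ f aᶜ) := by
      rw [← inf_sup_left, hf.map_compl, sup_compl_eq_top, inf_top_eq]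
    have h1 : ceProj f b = ceProj f (b ⊓ f a) ⊔ ceProj f (b ⊓ f aᶜ) := by
      conv_lhs => rw [hsplit]
      exact hf.proj_sup _ _
    have h2 : ceProj f (b ⊓ f aᶜ) ≤ aᶜ := by
      have := hf.proj_mono (inf_le_right (a := b) (b := f aᶜ))
      rwa [hf.proj_map] at this
    calc ceProj f b ⊓ a ≤ (ceProj f (b ⊓ f a) ⊔ aᶜ) ⊓ a := by
          refine inf_le_inf ?_ le_rfl
          rw [h1]; exact sup_le_sup le_rfl h2
      _ ≤ ceProj f (b ⊓ f a) := by
          rw [inf_sup_right, compl_inf_self, sup_bot_eq]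
          exact inf_le_left

theorem comp (hg : IsCE g) : IsCE (g ∘ f) where
  inj := hg.inj.comp hf.inj
  map_bot := by simp [Function.comp, hf.map_bot, hg.map_bot]
  map_top := by simp [Function.comp, hf.map_top, hg.map_top]
  map_inf a b := by simp [Function.comp, hf.map_inf, hg.map_inf]
  map_sSup S := by
    simp only [Function.comp, hf.map_sSup, hg.map_sSup, Set.image_image]

theorem proj_comp (hg : IsCE g) (c : γ) :
    ceProj (g ∘ f) c = ceProj f (ceProj g c) := by
  have key : ∀ x : α, ceProj (g ∘ f) c ≤ x ↔ ceProj f (ceProj g c) ≤ x := by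
    intro x
    rw [(hf.comp hg).proj_le_iff, hf.proj_le_iff, hg.proj_le_iff]
    rfl
  exact le_antisymm ((key _).mpr le_rfl) ((key _).mp le_rfl)

end IsCE
end Pair
section ILevel

variable {I : Type*} [PartialOrder I] (L : DistribAlmostLattice I)
  (A : I → Type*) [∀ i, CompleteBooleanAlgebra (A i)]
  (e : ∀ i j : I, i ≤ j → A i → A j)

theorem DistribAlmostLattice.le_meet {x i j : I} (h1 : x ≤ i) (h2 : x ≤ j) :
    x ≤ L.meet i j := by
  refine (L.meet_isGLB i j).2 ?_
  intro y hy
  rcases Set.mem_insert_iff.mp hy with rfl | hy'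
  · exact h1
  · exact (Set.mem_singleton_iff.mp hy') ▸ h2

theorem DistribAlmostLattice.join_le {i j u : I} (hub : ∃ u, i ≤ u ∧ j ≤ u)
    (h1 : i ≤ u) (h2 : j ≤ u) : L.join i j ≤ u := by
  refine (L.join_isLUB i j hub).2 ?_
  intro y hy
  rcases Set.mem_insert_iff.mp hy with rfl | hy'
  · exact h1
  · exact (Set.mem_singleton_iff.mp hy') ▸ h2

theorem sysProj_eq_ceProj (i j : I) (hij : i ≤ j) (a : A j) :
    sysProj A e i j hij a = ceProj (e i j hij) a := rfl

variable (hE : ∀ i j : I, ∀ hij : i ≤ j, IsCE (e i j hij))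
  (he_id : ∀ i : I, ∀ hii : i ≤ i, ∀ a : A i, e i i hii a = a)
  (he_comp : ∀ i j k : I, ∀ hij : i ≤ j, ∀ hjk : j ≤ k, ∀ a : A i,
      e j k hjk (e i j hij a) = e i k (hij.trans hjk) a)

set_option linter.unusedSectionVars false
include hE he_id he_comp

/-- composition of projections -/
theorem sysProj_comp {k j i : I} (hkj : k ≤ j) (hji : j ≤ i) (hki : k ≤ i) (a : A i) :
    sysProj A e k i hki a = sysProj A e k j hkj (sysProj A e j i hji a) := by
  have hcomp : e j i hji ∘ e k j hkj = e k i hki := by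
    funext x
    exact he_comp k j i hkj hji x
  rw [sysProj_eq_ceProj, sysProj_eq_ceProj, sysProj_eq_ceProj, ← hcomp]
  exact (hE k j hkj).proj_comp (hE j i hji) a

/-- projection of an embedded element, partial case -/
theorem sysProj_e {k j i : I} (hkj : k ≤ j) (hji : j ≤ i) (hki : k ≤ i) (a : A k) :
    sysProj A e j i hji (e k i hki a) = e k j hkj a := by
  have h1 : sysProj A e j i hji (e j i hji (e k j hkj a)) = e k j hkj a :=
    (hE j i hji).proj_map _
  rw [he_comp k j i hkj hji a] at h1
  exact h1

/-- lower bound for projections: `h_{j→l}(c) ≤ e_{m→l}(h_{j→m}(c))` -/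
theorem sysProj_le_e_sysProj {m l j : I} (hml : m ≤ l) (hlj : l ≤ j) (hmj : m ≤ j)
    (c : A j) :
    sysProj A e l j hlj c ≤ e m l hml (sysProj A e m j hmj c) := by
  rw [sysProj_comp A e hE he_id he_comp hml hlj hmj c]
  exact (hE m l hml).le_map_proj _


theorem sysProj_self (i : I) (hii : i ≤ i) (a : A i) : sysProj A e i i hii a = a := by
  apply le_antisymm
  · apply sInf_le
    show a ≤ e i i hii a
    rw [he_id]
  · apply le_sInf
    intro b hb
    have hb' : a ≤ e i i hii b := hb
    rwa [he_id] at hb'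

/-- generalized correctness -/
theorem sysProj_corr
    (hcorrect : ∀ i j : I, ∀ hub : ∃ u, i ≤ u ∧ j ≤ u, ∀ a : A i,
      sysProj A e j (L.join i j) (L.le_join_right i j hub)
          (e i (L.join i j) (L.le_join_left i j hub) a) =
        e (L.meet i j) j (L.meet_le_right i j)
          (sysProj A e (L.meet i j) i (L.meet_le_left i j) a))
    {u i l v : I} (hiu : i ≤ u) (hlu : l ≤ u) (hvi : v ≤ i) (hvl : v ≤ l)
    (hglb : L.meet i l ≤ v) (a : A i) :
    sysProj A e l u hlu (e i u hiu a) = e v l hvl (sysProj A e v i hvi a) := by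
  have hv : v = L.meet i l := le_antisymm (L.le_meet hvi hvl) hglb
  subst hv
  have hub : ∃ w, i ≤ w ∧ l ≤ w := ⟨u, hiu, hlu⟩
  have hik : i ≤ L.join i l := L.le_join_left i l hub
  have hlk : l ≤ L.join i l := L.le_join_right i l hub
  have hku : L.join i l ≤ u := L.join_le hub hiu hlu
  calc sysProj A e l u hlu (e i u hiu a)
      = sysProj A e l (L.join i l) hlk (sysProj A e (L.join i l) u hku (e i u hiu a)) :=
        sysProj_comp A e hE he_id he_comp hlk hku hlu _
    _ = sysProj A e l (L.join i l) hlk (e i (L.join i l) hik a) := by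
        rw [sysProj_e A e hE he_id he_comp hik hku hiu a]
    _ = e (L.meet i l) l (L.meet_le_right i l)
          (sysProj A e (L.meet i l) i (L.meet_le_left i l) a) := hcorrect i l hub a

/-- flexible characterization of `ProjLe` -/
theorem projLe_iff {i' i v : I} (hvi' : v ≤ i') (hvi : v ≤ i) (hm : L.meet i' i ≤ v)
    (p' : A i') (p : A i) :
    ProjLe L A e p' p ↔ e v i hvi (sysProj A e v i' hvi' p') ≤ p := by
  have hv : v = L.meet i' i := le_antisymm (L.le_meet hvi' hvi) hm
  subst hv
  exact Iff.rfl

/-- flexible intro for `InD` -/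
theorem inD_of {i j v : I} (hvi : v ≤ i) (hvj : v ≤ j) (hm : L.meet i j ≤ v)
    {p : A i} {q : A j} (hp : p ≠ ⊥) (hq : q ≠ ⊥)
    (heq : sysProj A e v i hvi p = sysProj A e v j hvj q) : InD L A e p q := by
  have hv : v = L.meet i j := le_antisymm (L.le_meet hvi hvj) hm
  subst hv
  exact ⟨hp, hq, heq⟩

/-- flexible elim for `InD` -/
theorem inD_agree {i j : I} {p : A i} {q : A j} (h : InD L A e p q)
    {v : I} (h1 : v ≤ i) (h2 : v ≤ j) :
    sysProj A e v i h1 p = sysProj A e v j h2 q := by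
  have hvm : v ≤ L.meet i j := L.le_meet h1 h2
  rw [sysProj_comp A e hE he_id he_comp hvm (L.meet_le_left i j) h1 p,
    sysProj_comp A e hE he_id he_comp hvm (L.meet_le_right i j) h2 q]
  have h3 : InD L A e p q := h
  rw [h3.2.2]

/-- wrappers -/
theorem sysProj_frobenius {l k : I} (hlk : l ≤ k) (x : A k) (y : A l) :
    sysProj A e l k hlk (x ⊓ e l k hlk y) = sysProj A e l k hlk x ⊓ y :=
  (hE l k hlk).proj_frobenius x y

theorem sysProj_mono {l k : I} (hlk : l ≤ k) {x y : A k} (h : x ≤ y) :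
    sysProj A e l k hlk x ≤ sysProj A e l k hlk y :=
  (hE l k hlk).proj_mono h

theorem sysProj_map {l k : I} (hlk : l ≤ k) (y : A l) :
    sysProj A e l k hlk (e l k hlk y) = y :=
  (hE l k hlk).proj_map y

theorem sysProj_bot {l k : I} (hlk : l ≤ k) : sysProj A e l k hlk ⊥ = ⊥ :=
  (hE l k hlk).proj_bot

theorem sysProj_eq_bot_iff {l k : I} (hlk : l ≤ k) {x : A k} :
    sysProj A e l k hlk x = ⊥ ↔ x = ⊥ :=
  (hE l k hlk).proj_eq_bot_iff

theorem le_e_sysProj {l k : I} (hlk : l ≤ k) (x : A k) :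
    x ≤ e l k hlk (sysProj A e l k hlk x) :=
  (hE l k hlk).le_map_proj x

theorem e_eq_bot {l k : I} (hlk : l ≤ k) {y : A l} (h : e l k hlk y = ⊥) : y = ⊥ :=
  (hE l k hlk).eq_bot h

/-- selecting an element of a maximal antichain compatible with a given nonzero element -/
theorem antichain_sel {i0 : I} {M : Set (A i0)} (hsup : sSup M = ⊤)
    {k : I} (hk : i0 ≤ k) (x : A k) (hx : x ≠ ⊥) :
    ∃ m ∈ M, x ⊓ e i0 k hk m ≠ ⊥ := by
  by_contra hcon
  push_neg at hcon
  apply hx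
  have h1 : x = x ⊓ e i0 k hk (sSup M) := by
    rw [hsup, (hE i0 k hk).map_top, inf_top_eq]
  rw [h1, (hE i0 k hk).map_sSup, inf_sSup_eq]
  simp only [iSup_eq_bot]
  rintro b ⟨m, hm, rfl⟩
  exact hcon m hm

/-- the mixed-case contradiction for part (a) -/
theorem mixed_contradiction
    (hcorrect : ∀ i j : I, ∀ hub : ∃ u, i ≤ u ∧ j ≤ u, ∀ a : A i,
      sysProj A e j (L.join i j) (L.le_join_right i j hub)
          (e i (L.join i j) (L.le_join_left i j hub) a) =
        e (L.meet i j) j (L.meet_le_right i j)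
          (sysProj A e (L.meet i j) i (L.meet_le_left i j) a))
    {i0 : I} {p p' : A i0} (hdisj : p ⊓ p' = ⊥)
    {i'' j'' : I} {p'' : A i''} {q'' : A j''} (hp'' : p'' ≠ ⊥)
    (hagree : ∀ v (h1 : v ≤ i'') (h2 : v ≤ j''),
      sysProj A e v i'' h1 p'' = sysProj A e v j'' h2 q'')
    (h1 : ProjLe L A e p'' p) (h2 : ProjLe L A e q'' p') : False := by
  set i' := L.meet i'' i0 with hi'def
  set j' := L.meet j'' i0 with hj'def
  set m' := L.meet i' j' with hm'def
  have hi'i'' : i' ≤ i'' := L.meet_le_left i'' i0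
  have hi'i0 : i' ≤ i0 := L.meet_le_right i'' i0
  have hj'j'' : j' ≤ j'' := L.meet_le_left j'' i0
  have hj'i0 : j' ≤ i0 := L.meet_le_right j'' i0
  have hm'i' : m' ≤ i' := L.meet_le_left i' j'
  have hm'j' : m' ≤ j' := L.meet_le_right i' j'
  set a := sysProj A e i' i'' hi'i'' p'' with ha
  set b := sysProj A e j' j'' hj'j'' q'' with hb
  set r := sysProj A e m' i'' (hm'i'.trans hi'i'') p'' with hrdef
  have hra : sysProj A e m' i' hm'i' a = r := by
    rw [ha, hrdef]
    exact (sysProj_comp A e hE he_id he_comp hm'i' hi'i'' (hm'i'.trans hi'i'') p'').symm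
  have hrb : sysProj A e m' j' hm'j' b = r := by
    rw [hb, hrdef,
      ← sysProj_comp A e hE he_id he_comp hm'j' hj'j'' (hm'j'.trans hj'j'') q'']
    exact (hagree m' (hm'i'.trans hi'i'') (hm'j'.trans hj'j'')).symm
  have hrne : r ≠ ⊥ := fun h =>
    hp'' ((sysProj_eq_bot_iff A e hE he_id he_comp (hm'i'.trans hi'i'')).mp (hrdef ▸ h))
  have h1' : e i' i0 hi'i0 a ≤ p := h1
  have h2' : e j' i0 hj'i0 b ≤ p' := h2
  have hbot : e i' i0 hi'i0 a ⊓ e j' i0 hj'i0 b = ⊥ :=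
    le_bot_iff.mp ((inf_le_inf h1' h2').trans_eq hdisj)
  have hproj : sysProj A e j' i0 hj'i0 (e i' i0 hi'i0 a ⊓ e j' i0 hj'i0 b) =
      sysProj A e j' i0 hj'i0 (e i' i0 hi'i0 a) ⊓ b :=
    sysProj_frobenius A e hE he_id he_comp hj'i0 (e i' i0 hi'i0 a) b
  have hcorr : sysProj A e j' i0 hj'i0 (e i' i0 hi'i0 a) =
      e m' j' hm'j' (sysProj A e m' i' hm'i' a) :=
    sysProj_corr L A e hE he_id he_comp hcorrect hi'i0 hj'i0 hm'i' hm'j' le_rfl a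
  rw [hbot, hcorr, hra, sysProj_bot A e hE he_id he_comp hj'i0] at hproj
  have hproj' : b ⊓ e m' j' hm'j' r = ⊥ := by rw [inf_comm]; exact hproj.symm
  have hfin : sysProj A e m' j' hm'j' (b ⊓ e m' j' hm'j' r) =
      sysProj A e m' j' hm'j' b ⊓ r :=
    sysProj_frobenius A e hE he_id he_comp hm'j' b r
  rw [hproj', hrb, inf_idem, sysProj_bot A e hE he_id he_comp hm'j'] at hfin
  exact hrne hfin.symm

/-- the pure-case contradiction for part (a) -/
theorem pure_contradiction
    {i0 : I} {p p' : A i0} (hdisj : p ⊓ p' = ⊥)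
    {i'' : I} {p'' : A i''} (hp'' : p'' ≠ ⊥)
    (h1 : ProjLe L A e p'' p) (h2 : ProjLe L A e p'' p') : False := by
  have h1' : e (L.meet i'' i0) i0 (L.meet_le_right i'' i0)
      (sysProj A e (L.meet i'' i0) i'' (L.meet_le_left i'' i0) p'') ≤ p := h1
  have h2' : e (L.meet i'' i0) i0 (L.meet_le_right i'' i0)
      (sysProj A e (L.meet i'' i0) i'' (L.meet_le_left i'' i0) p'') ≤ p' := h2
  have hbot := le_bot_iff.mp ((le_inf h1' h2').trans_eq hdisj)
  have := e_eq_bot A e hE he_id he_comp (L.meet_le_right i'' i0) hbot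
  exact hp'' ((sysProj_eq_bot_iff A e hE he_id he_comp (L.meet_le_left i'' i0)).mp this)

/-- swapping the target of `Sqle` -/
theorem sqle_swap {i j i' j' : I} {p' : A i'} {q' : A j'} {q : A j} {p : A i}
    (h : Sqle L A e p' q' q p) : Sqle L A e p' q' p q := by
  rcases h with ⟨h1, h2⟩ | ⟨h1, h2⟩ | ⟨h1, h2⟩ | ⟨h1, h2⟩
  · exact Or.inr (Or.inl ⟨h2, h1⟩)
  · exact Or.inl ⟨h2, h1⟩
  · exact Or.inr (Or.inr (Or.inl ⟨h2, h1⟩))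
  · exact Or.inr (Or.inr (Or.inr ⟨h2, h1⟩))

/-- case (b1): `i` and `j` have a common upper bound `u` -/
theorem bCase1
    (hcorrect : ∀ i j : I, ∀ hub : ∃ u, i ≤ u ∧ j ≤ u, ∀ a : A i,
      sysProj A e j (L.join i j) (L.le_join_right i j hub)
          (e i (L.join i j) (L.le_join_left i j hub) a) =
        e (L.meet i j) j (L.meet_le_right i j)
          (sysProj A e (L.meet i j) i (L.meet_le_left i j) a))
    {i0 : I} {M : Set (A i0)} (hsup : sSup M = ⊤)
    {i j u : I} (hiu : i ≤ u) (hju : j ≤ u) {p : A i} {q : A j}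
    (hD : InD L A e p q) :
    ∃ m ∈ M, ∃ (i'' j'' : I) (p'' : A i'') (q'' : A j''),
      InD L A e p'' q'' ∧ Sqle L A e p'' q'' p q ∧ Sqle L A e p'' q'' m m := by
  have hp : p ≠ ⊥ := hD.1
  have hq : q ≠ ⊥ := hD.2.1
  set w := L.meet i j with hwdef
  have hwi : w ≤ i := L.meet_le_left i j
  have hwj : w ≤ j := L.meet_le_right i j
  set c := e i u hiu p ⊓ e j u hju q with hcdef
  have hcproj : sysProj A e j u hju c =
      e w j hwj (sysProj A e w j hwj q) ⊓ q := by
    rw [hcdef, sysProj_frobenius A e hE he_id he_comp hju (e i u hiu p) q,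
      sysProj_corr L A e hE he_id he_comp hcorrect hiu hju hwi hwj le_rfl p,
      inD_agree L A e hE he_id he_comp hD hwi hwj]
  have hcne : c ≠ ⊥ := by
    intro h0
    apply hq
    have h2 : q ≤ sysProj A e j u hju c := by
      rw [hcproj]
      exact le_inf (le_e_sysProj A e hE he_id he_comp hwj q) le_rfl
    rw [h0, sysProj_bot A e hE he_id he_comp hju] at h2
    exact le_bot_iff.mp h2
  set l := L.meet u i0 with hldef
  have hlu : l ≤ u := L.meet_le_left u i0
  have hli0 : l ≤ i0 := L.meet_le_right u i0
  set r := sysProj A e l u hlu c with hrdef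
  have hrne : r ≠ ⊥ := fun h =>
    hcne ((sysProj_eq_bot_iff A e hE he_id he_comp hlu).mp (hrdef ▸ h))
  have hxne : e l i0 hli0 r ≠ ⊥ := fun h => hrne (e_eq_bot A e hE he_id he_comp hli0 h)
  obtain ⟨m, hmM, hmne⟩ :=
    antichain_sel A e hE he_id he_comp hsup (le_refl i0) (e l i0 hli0 r) hxne
  rw [he_id] at hmne
  set q'' := m ⊓ e l i0 hli0 r with hq''def
  have hq''ne : q'' ≠ ⊥ := by rw [hq''def, inf_comm]; exact hmne
  set s := sysProj A e l i0 hli0 q'' with hsdef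
  have hsfro : s = sysProj A e l i0 hli0 m ⊓ r := by
    rw [hsdef, hq''def]
    exact sysProj_frobenius A e hE he_id he_comp hli0 m r
  have hsne : s ≠ ⊥ := fun h =>
    hq''ne ((sysProj_eq_bot_iff A e hE he_id he_comp hli0).mp (hsdef ▸ h))
  have hsler : s ≤ r := hsfro ▸ inf_le_right
  set p'' := c ⊓ e l u hlu s with hp''def
  have hp''proj : sysProj A e l u hlu p'' = s := by
    rw [hp''def, sysProj_frobenius A e hE he_id he_comp hlu c s, ← hrdef]
    exact inf_eq_right.mpr hsler
  have hp''ne : p'' ≠ ⊥ := fun h => hsne (by rw [← hp''proj, h, sysProj_bot A e hE he_id he_comp hlu])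
  refine ⟨m, hmM, u, i0, p'', q'', ?_, ?_, ?_⟩
  · exact inD_of L A e hE he_id he_comp hlu hli0 le_rfl hp''ne hq''ne
      (by rw [hp''proj, hsdef])
  · refine Or.inr (Or.inr (Or.inl ⟨?_, ?_⟩))
    · rw [projLe_iff L A e hE he_id he_comp hiu (le_refl i) (L.meet_le_right u i) p'' p,
        he_id]
      calc sysProj A e i u hiu p''
          ≤ sysProj A e i u hiu (e i u hiu p) :=
            sysProj_mono A e hE he_id he_comp hiu
              (le_trans (hp''def ▸ inf_le_left) (hcdef ▸ inf_le_left))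
        _ = p := sysProj_map A e hE he_id he_comp hiu p
    · rw [projLe_iff L A e hE he_id he_comp hju (le_refl j) (L.meet_le_right u j) p'' q,
        he_id]
      calc sysProj A e j u hju p''
          ≤ sysProj A e j u hju (e j u hju q) :=
            sysProj_mono A e hE he_id he_comp hju
              (le_trans (hp''def ▸ inf_le_left) (hcdef ▸ inf_le_right))
        _ = q := sysProj_map A e hE he_id he_comp hju q
  · have hqm : ProjLe L A e q'' m := by
      rw [projLe_iff L A e hE he_id he_comp (le_refl i0) (le_refl i0)
        (L.meet_le_right i0 i0) q'' m, he_id,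
        sysProj_self A e hE he_id he_comp i0 (le_refl i0) q'']
      exact hq''def ▸ inf_le_left
    exact Or.inr (Or.inr (Or.inr ⟨hqm, hqm⟩))

/-- case (b2): `i` and `i0` have a common upper bound `u` -/
theorem bCase2
    (hcorrect : ∀ i j : I, ∀ hub : ∃ u, i ≤ u ∧ j ≤ u, ∀ a : A i,
      sysProj A e j (L.join i j) (L.le_join_right i j hub)
          (e i (L.join i j) (L.le_join_left i j hub) a) =
        e (L.meet i j) j (L.meet_le_right i j)
          (sysProj A e (L.meet i j) i (L.meet_le_left i j) a))
    {i0 : I} {M : Set (A i0)} (hsup : sSup M = ⊤)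
    {i j u : I} (hiu : i ≤ u) (hi0u : i0 ≤ u) {p : A i} {q : A j}
    (hD : InD L A e p q) :
    ∃ m ∈ M, ∃ (i'' j'' : I) (p'' : A i'') (q'' : A j''),
      InD L A e p'' q'' ∧ Sqle L A e p'' q'' p q ∧ Sqle L A e p'' q'' m m := by
  have hp : p ≠ ⊥ := hD.1
  have hq : q ≠ ⊥ := hD.2.1
  set w := L.meet i j with hwdef
  have hwi : w ≤ i := L.meet_le_left i j
  have hwj : w ≤ j := L.meet_le_right i j
  set l := L.meet u j with hldef
  have hlu : l ≤ u := L.meet_le_left u j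
  have hlj : l ≤ j := L.meet_le_right u j
  have hwu : w ≤ u := hwi.trans hiu
  have hwl : w ≤ l := L.le_meet hwu hwj
  have hkey : sysProj A e l u hlu (e i u hiu p) = e w l hwl (sysProj A e w i hwi p) :=
    sysProj_corr L A e hE he_id he_comp hcorrect hiu hlu hwi hwl
      (L.le_meet (L.meet_le_left i l) ((L.meet_le_right i l).trans hlj)) p
  set t := e i u hiu p ⊓ e l u hlu (sysProj A e l j hlj q) with htdef
  have htproj : sysProj A e l u hlu t = sysProj A e l j hlj q := by
    rw [htdef, sysProj_frobenius A e hE he_id he_comp hlu (e i u hiu p)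
        (sysProj A e l j hlj q), hkey,
      inD_agree L A e hE he_id he_comp hD hwi hwj]
    exact inf_eq_right.mpr (sysProj_le_e_sysProj A e hE he_id he_comp hwl hlj hwj q)
  have htne : t ≠ ⊥ := by
    intro h0
    apply hq
    have h1 := htproj
    rw [h0, sysProj_bot A e hE he_id he_comp hlu] at h1
    exact (sysProj_eq_bot_iff A e hE he_id he_comp hlj).mp h1.symm
  obtain ⟨m, hmM, hmne⟩ := antichain_sel A e hE he_id he_comp hsup hi0u t htne
  set p1 := e i u hiu p ⊓ e i0 u hi0u m with hp1def
  have htm : t ⊓ e i0 u hi0u m = p1 ⊓ e l u hlu (sysProj A e l j hlj q) := by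
    rw [htdef, hp1def]; ac_rfl
  set s := sysProj A e l u hlu (p1 ⊓ e l u hlu (sysProj A e l j hlj q)) with hsdef
  have hsne : s ≠ ⊥ := by
    rw [hsdef, ← htm]
    intro h0
    exact hmne ((sysProj_eq_bot_iff A e hE he_id he_comp hlu).mp h0)
  have hsfro : s = sysProj A e l u hlu p1 ⊓ sysProj A e l j hlj q := by
    rw [hsdef]
    exact sysProj_frobenius A e hE he_id he_comp hlu p1 (sysProj A e l j hlj q)
  set q'' := q ⊓ e l j hlj s with hq''def
  have hq''proj : sysProj A e l j hlj q'' = s := by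
    rw [hq''def, sysProj_frobenius A e hE he_id he_comp hlj q s]
    exact inf_eq_right.mpr (hsfro ▸ inf_le_right)
  have hq''ne : q'' ≠ ⊥ := fun h =>
    hsne (by rw [← hq''proj, h, sysProj_bot A e hE he_id he_comp hlj])
  set p'' := p1 ⊓ e l u hlu s with hp''def
  have hp''proj : sysProj A e l u hlu p'' = s := by
    rw [hp''def, sysProj_frobenius A e hE he_id he_comp hlu p1 s]
    exact inf_eq_right.mpr (hsfro ▸ inf_le_left)
  have hp''ne : p'' ≠ ⊥ := fun h =>
    hsne (by rw [← hp''proj, h, sysProj_bot A e hE he_id he_comp hlu])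
  refine ⟨m, hmM, u, j, p'', q'', ?_, ?_, ?_⟩
  · exact inD_of L A e hE he_id he_comp hlu hlj le_rfl hp''ne hq''ne
      (hp''proj.trans hq''proj.symm)
  · refine Or.inl ⟨?_, ?_⟩
    · rw [projLe_iff L A e hE he_id he_comp hiu (le_refl i) (L.meet_le_right u i) p'' p,
        he_id]
      calc sysProj A e i u hiu p''
          ≤ sysProj A e i u hiu (e i u hiu p) :=
            sysProj_mono A e hE he_id he_comp hiu
              (le_trans (hp''def ▸ inf_le_left) (hp1def ▸ inf_le_left))
        _ = p := sysProj_map A e hE he_id he_comp hiu p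
    · rw [projLe_iff L A e hE he_id he_comp (le_refl j) (le_refl j)
        (L.meet_le_right j j) q'' q, he_id,
        sysProj_self A e hE he_id he_comp j (le_refl j) q'']
      exact hq''def ▸ inf_le_left
  · have hpm : ProjLe L A e p'' m := by
      rw [projLe_iff L A e hE he_id he_comp hi0u (le_refl i0) (L.meet_le_right u i0) p'' m,
        he_id]
      calc sysProj A e i0 u hi0u p''
          ≤ sysProj A e i0 u hi0u (e i0 u hi0u m) :=
            sysProj_mono A e hE he_id he_comp hi0u
              (le_trans (hp''def ▸ inf_le_left) (hp1def ▸ inf_le_right))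
        _ = m := sysProj_map A e hE he_id he_comp hi0u m
    exact Or.inr (Or.inr (Or.inl ⟨hpm, hpm⟩))

end ILevel
/-- Complete embeddability into the amalgamated limit: (a) incompatible elements of
`𝔸_{i0}` stay incompatible in `(D, ⊑)`, and (b) maximal antichains of `𝔸_{i0}` remain
predense in `(D, ⊑)`. -/
theorem complete_embedding_into_amalgamated_limit
    {I : Type*} [PartialOrder I] (L : DistribAlmostLattice I)
    (A : I → Type*) [∀ i, CompleteBooleanAlgebra (A i)]
    (e : ∀ i j : I, i ≤ j → A i → A j)
    -- the `e i j` are complete embeddings forming a commuting system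
    (he_inj : ∀ i j : I, ∀ hij : i ≤ j, Function.Injective (e i j hij))
    (he_bot : ∀ i j : I, ∀ hij : i ≤ j, e i j hij ⊥ = ⊥)
    (he_top : ∀ i j : I, ∀ hij : i ≤ j, e i j hij ⊤ = ⊤)
    (he_inf : ∀ i j : I, ∀ hij : i ≤ j, ∀ a b : A i,
      e i j hij (a ⊓ b) = e i j hij a ⊓ e i j hij b)
    (he_sup : ∀ i j : I, ∀ hij : i ≤ j, ∀ a b : A i,
      e i j hij (a ⊔ b) = e i j hij a ⊔ e i j hij b)
    (he_sSup : ∀ i j : I, ∀ hij : i ≤ j, ∀ S : Set (A i),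
      e i j hij (sSup S) = sSup (e i j hij '' S))
    (he_id : ∀ i : I, ∀ hii : i ≤ i, ∀ a : A i, e i i hii a = a)
    (he_comp : ∀ i j k : I, ∀ hij : i ≤ j, ∀ hjk : j ≤ k, ∀ a : A i,
      e j k hjk (e i j hij a) = e i k (hij.trans hjk) a)
    -- correctness: `h_{i∨j,j}(e_{i,i∨j}(a)) = e_{i∧j,j}(h_{i,i∧j}(a))`
    (hcorrect : ∀ i j : I, ∀ hub : ∃ u, i ≤ u ∧ j ≤ u, ∀ a : A i,
      sysProj A e j (L.join i j) (L.le_join_right i j hub)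
          (e i (L.join i j) (L.le_join_left i j hub) a) =
        e (L.meet i j) j (L.meet_le_right i j)
          (sysProj A e (L.meet i j) i (L.meet_le_left i j) a))
    (i0 : I) :
    -- (a) incompatibility is preserved
    (∀ p p' : A i0, p ≠ ⊥ → p' ≠ ⊥ → p ⊓ p' = ⊥ →
      ¬ ∃ (i'' j'' : I) (p'' : A i'') (q'' : A j''),
        InD L A e p'' q'' ∧ Sqle L A e p'' q'' p p ∧ Sqle L A e p'' q'' p' p') ∧
    -- (b) maximal antichains of `𝔸_{i0}` remain predense
    (∀ M : Set (A i0),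
      (∀ m ∈ M, m ≠ ⊥) →
      (∀ m ∈ M, ∀ m' ∈ M, m ≠ m' → m ⊓ m' = ⊥) →
      sSup M = ⊤ →
      ∀ i j : I, ∀ p : A i, ∀ q : A j, InD L A e p q →
        ∃ m ∈ M, ∃ (i'' j'' : I) (p'' : A i'') (q'' : A j''),
          InD L A e p'' q'' ∧ Sqle L A e p'' q'' p q ∧
            Sqle L A e p'' q'' m m) := by

  have hE : ∀ i j : I, ∀ hij : i ≤ j, IsCE (e i j hij) := fun i j hij =>
    ⟨he_inj i j hij, he_bot i j hij, he_top i j hij, he_inf i j hij, he_sSup i j hij⟩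
  constructor
  · rintro p p' hp hp' hdisj ⟨i'', j'', p'', q'', hD, hS1, hS2⟩
    have hp''ne : p'' ≠ ⊥ := hD.1
    have hq''ne : q'' ≠ ⊥ := hD.2.1
    have hagree : ∀ v (h1 : v ≤ i'') (h2 : v ≤ j''),
        sysProj A e v i'' h1 p'' = sysProj A e v j'' h2 q'' := fun v h1 h2 =>
      inD_agree L A e hE he_id he_comp hD h1 h2
    have hagree' : ∀ v (h1 : v ≤ j'') (h2 : v ≤ i''),
        sysProj A e v j'' h1 q'' = sysProj A e v i'' h2 p'' := fun v h1 h2 =>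
      (hagree v h2 h1).symm
    have hor1 : ProjLe L A e p'' p ∨ ProjLe L A e q'' p := by
      rcases hS1 with ⟨h, -⟩ | ⟨h, -⟩ | ⟨h, -⟩ | ⟨h, -⟩
      exacts [Or.inl h, Or.inr h, Or.inl h, Or.inr h]
    have hor2 : ProjLe L A e p'' p' ∨ ProjLe L A e q'' p' := by
      rcases hS2 with ⟨h, -⟩ | ⟨h, -⟩ | ⟨h, -⟩ | ⟨h, -⟩
      exacts [Or.inl h, Or.inr h, Or.inl h, Or.inr h]
    rcases hor1 with h1 | h1 <;> rcases hor2 with h2 | h2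
    · exact pure_contradiction L A e hE he_id he_comp hdisj hp''ne h1 h2
    · exact mixed_contradiction L A e hE he_id he_comp hcorrect hdisj hp''ne hagree h1 h2
    · exact mixed_contradiction L A e hE he_id he_comp hcorrect hdisj hq''ne hagree' h1 h2
    · exact pure_contradiction L A e hE he_id he_comp hdisj hq''ne h1 h2
  · intro M hMne hMac hMsup i j p q hD
    rcases L.two_of_three i j i0 with ⟨u, h1, h2⟩ | ⟨u, h1, h2⟩ | ⟨u, h1, h2⟩
    · exact bCase1 L A e hE he_id he_comp hcorrect hMsup h1 h2 hD
    · exact bCase2 L A e hE he_id he_comp hcorrect hMsup h1 h2 hD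
    · have hD' : InD L A e q p :=
        inD_of L A e hE he_id he_comp (L.meet_le_left j i) (L.meet_le_right j i) le_rfl
          hD.2.1 hD.1
          (inD_agree L A e hE he_id he_comp hD (L.meet_le_right j i) (L.meet_le_left j i)).symm
      obtain ⟨m, hmM, i'', j'', p'', q'', hD'', hS1, hS2⟩ :=
        bCase2 L A e hE he_id he_comp hcorrect hMsup h1 h2 hD'
      exact ⟨m, hmM, i'', j'', p'', q'', hD'',
        sqle_swap L A e hE he_id he_comp hS1, hS2⟩
end

section
/- Let A0 and A1 be complete Boolean algebras and e : A0 → A1 an injective bounded lattice homomorphism. Then the dual map p : X_{A1} → X_{A0}, p(x) = x ∘ e, is an open map if and only if e is a complete embedding, i.e., for every b ∈ A1 with b ≠ ⊥ one has sInf {a ∈ A0 : b ≤ e(a)} ≠ ⊥. -/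
/-- The Stone space of a Boolean algebra `B`: bounded lattice homomorphisms from `B` to
`Bool`, topologized as a subspace of the product space `Bool ^ B` with `Bool` discrete. -/
abbrev StonePoints (B : Type*) [BooleanAlgebra B] : Type _ :=
  BoundedLatticeHom B Bool

noncomputable instance (B : Type*) [BooleanAlgebra B] : TopologicalSpace (StonePoints B) :=
  TopologicalSpace.induced
    (fun x : BoundedLatticeHom B Bool => (x : B → Bool))
    (@Pi.topologicalSpace B (fun _ => Bool) (fun _ => ⊥))

section Aux

variable {B : Type*} [BooleanAlgebra B]

lemma aux_exists_hom_of_filter (F : Set B)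
    (htop : (⊤ : B) ∈ F) (hinf : ∀ a ∈ F, ∀ b ∈ F, a ⊓ b ∈ F)
    (hup : ∀ a ∈ F, ∀ b, a ≤ b → b ∈ F) (hbot : (⊥ : B) ∉ F) :
    ∃ x : BoundedLatticeHom B Bool, ∀ a ∈ F, x a = true := by
  classical
  have hPF : Order.IsPFilter F :=
    Order.IsPFilter.of_def ⟨⊤, htop⟩
      (fun a ha b hb => ⟨a ⊓ b, hinf a ha b hb, inf_le_left, inf_le_right⟩)
      (fun {x y} h hx => hup x hx y h)
  set Fp : Order.PFilter B := hPF.toPFilter with hFp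
  have hmemF : ∀ a : B, a ∈ Fp ↔ a ∈ F := fun a => Iff.rfl
  have hdisj : Disjoint (Fp : Set B) ((Order.Ideal.principal (⊥ : B)) : Set B) := by
    rw [Set.disjoint_left]
    intro a ha ha'
    have h1 : a ≤ ⊥ := Order.Ideal.mem_principal.mp ha'
    exact hbot (le_bot_iff.mp h1 ▸ (hmemF a).mp ha)
  obtain ⟨J, hJ, -, hJdisj⟩ := DistribLattice.prime_ideal_of_disjoint_filter_ideal hdisj
  have hsup : ∀ a b : B, a ⊔ b ∈ J ↔ a ∈ J ∧ b ∈ J := fun a b =>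
    ⟨fun h => ⟨J.lower le_sup_left h, J.lower le_sup_right h⟩, fun ⟨ha, hb⟩ => J.sup_mem ha hb⟩
  have hinfJ : ∀ a b : B, a ⊓ b ∈ J ↔ a ∈ J ∨ b ∈ J := fun a b =>
    ⟨fun h => hJ.mem_or_mem h, fun h => h.elim (fun h => J.lower inf_le_left h)
      (fun h => J.lower inf_le_right h)⟩
  refine ⟨⟨⟨⟨fun b => decide (b ∉ J), ?_⟩, ?_⟩, ?_, ?_⟩, ?_⟩
  · intro a b
    by_cases ha : a ∈ J <;> by_cases hb : b ∈ J <;> simp_all [hinfJ a b]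
  · intro a b
    by_cases ha : a ∈ J <;> by_cases hb : b ∈ J <;> simp_all [hsup a b]
  · simpa using hJ.top_notMem
  · simpa using J.bot_mem
  · intro a ha
    have : a ∉ (J : Set B) := Set.disjoint_left.mp hJdisj ((hmemF a).mpr ha)
    simpa using this

lemma aux_hom_mono (x : BoundedLatticeHom B Bool) {a b : B} (h : a ≤ b)
    (ha : x a = true) : x b = true := by
  have h1 : x (a ⊓ b) = x a ⊓ x b := map_inf x a b
  rw [inf_eq_left.mpr h, ha] at h1
  cases hb : x b
  · rw [hb] at h1; exact absurd h1 (by decide)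
  · rfl

lemma aux_hom_compl (x : BoundedLatticeHom B Bool) (a : B) : x aᶜ = !(x a) := by
  rw [map_compl' x a]; rfl

lemma aux_exists_hom_true {b : B} (hb : b ≠ ⊥) :
    ∃ x : BoundedLatticeHom B Bool, x b = true := by
  obtain ⟨x, hx⟩ := aux_exists_hom_of_filter {a : B | b ≤ a} le_top
    (fun a ha c hc => le_inf ha hc) (fun a ha c hc => le_trans ha hc)
    (fun h => hb (le_bot_iff.mp h))
  exact ⟨x, hx b le_rfl⟩

lemma aux_finset_inf_true {ι : Type*} (s : Finset ι) (f : ι → Bool) :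
    s.inf f = true ↔ ∀ i ∈ s, f i = true :=
  Finset.inf_eq_top_iff f s

lemma aux_isOpen_Ob (b : B) : IsOpen {z : StonePoints B | z b = true} := by
  refine ⟨(fun f : B → Bool => f b) ⁻¹' {true}, ?_, rfl⟩
  exact (continuous_apply b).isOpen_preimage _ (isOpen_discrete _)

lemma aux_exists_basic {U : Set (StonePoints B)} (hU : IsOpen U) {x : StonePoints B}
    (hx : x ∈ U) :
    ∃ b : B, x b = true ∧ ∀ z : StonePoints B, z b = true → z ∈ U := by
  obtain ⟨W, hW, rfl⟩ := isOpen_induced_iff.mp hU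
  rw [isOpen_pi_iff] at hW
  obtain ⟨I, u, hu, hsub⟩ := hW _ hx
  classical
  have key : ∀ z : StonePoints B, ∀ i : B,
      z (if x i = true then i else iᶜ) = true ↔ z i = x i := by
    intro z i
    by_cases h : x i = true
    · rw [if_pos h, h]
    · rw [if_neg h, aux_hom_compl]
      have hx' : x i = false := by simpa using h
      rw [hx']
      cases hzi : z i <;> simp
  refine ⟨I.inf (fun i => if x i = true then i else iᶜ), ?_, ?_⟩
  · have h1 : x (I.inf (fun i => if x i = true then i else iᶜ))
        = I.inf (fun i => x (if x i = true then i else iᶜ)) := map_finset_inf x I _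
    rw [h1, aux_finset_inf_true]
    intro i _
    exact (key x i).mpr rfl
  · intro z hz
    have h1 : z (I.inf (fun i => if x i = true then i else iᶜ))
        = I.inf (fun i => z (if x i = true then i else iᶜ)) := map_finset_inf z I _
    rw [h1, aux_finset_inf_true] at hz
    refine hsub fun i hi => ?_
    show z i ∈ u i
    rw [(key z i).mp (hz i hi)]
    exact (hu i hi).2

end Aux

/-- The dual map of an injective bounded lattice homomorphism between complete Boolean
algebras is open iff the homomorphism is a complete embedding. -/
theorem dual_open_iff_complete_embedding
    {A0 A1 : Type*} [CompleteBooleanAlgebra A0] [CompleteBooleanAlgebra A1]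
    (e : BoundedLatticeHom A0 A1) (he : Function.Injective e) :
    IsOpenMap (fun x : StonePoints A1 => (BoundedLatticeHom.comp x e : StonePoints A0)) ↔
      ∀ b : A1, b ≠ ⊥ → sInf {a : A0 | b ≤ e a} ≠ ⊥ := by
  set p : StonePoints A1 → StonePoints A0 :=
    fun x => (BoundedLatticeHom.comp x e : StonePoints A0) with hp
  constructor
  · -- open map → complete embedding
    intro hopen b hb
    obtain ⟨x, hx⟩ := aux_exists_hom_true hb
    have hO : IsOpen (p '' {z : StonePoints A1 | z b = true}) :=
      hopen _ (aux_isOpen_Ob b)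
    have hyU : p x ∈ p '' {z : StonePoints A1 | z b = true} := ⟨x, hx, rfl⟩
    obtain ⟨a₀, ha₀, hsub⟩ := aux_exists_basic hO hyU
    have ha₀bot : a₀ ≠ ⊥ := by
      intro h; rw [h] at ha₀
      have : (p x) ⊥ = ⊥ := map_bot _
      rw [ha₀] at this; exact absurd this (by simp)
    have hlb : a₀ ≤ sInf {a : A0 | b ≤ e a} := by
      refine le_sInf fun a ha => ?_
      by_contra hle
      have hne : a₀ \ a ≠ ⊥ := fun h => hle (sdiff_eq_bot_iff.mp h)
      obtain ⟨z, hz⟩ := aux_exists_hom_true hne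
      have hz₀ : z a₀ = true := aux_hom_mono z sdiff_le hz
      have hza : z a = false := by
        have h1 : z aᶜ = true :=
          aux_hom_mono z (show a₀ \ a ≤ aᶜ by rw [sdiff_eq]; exact inf_le_right) hz
        rw [aux_hom_compl] at h1; simpa using h1
      obtain ⟨x', hx', hpx'⟩ := hsub z hz₀
      have : z a = true := by
        rw [← hpx']
        exact aux_hom_mono x' (ha : b ≤ e a) hx'
      rw [this] at hza; exact absurd hza (by simp)
    intro h
    exact ha₀bot (le_bot_iff.mp (h ▸ hlb))
  · -- complete embedding → open map
    intro H
    -- Step 1: b ≤ e (sInf {a | b ≤ e a})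
    have key : ∀ b : A1, b ≤ e (sInf {a : A0 | b ≤ e a}) := by
      intro b
      by_contra hnot
      set c := sInf {a : A0 | b ≤ e a} with hc
      have hb' : b \ e c ≠ ⊥ := fun h => hnot (sdiff_eq_bot_iff.mp h)
      refine H _ hb' ?_
      have h1 : sInf {a : A0 | b \ e c ≤ e a} ≤ c :=
        sInf_le_sInf fun a ha => le_trans sdiff_le ha
      have h2 : sInf {a : A0 | b \ e c ≤ e a} ≤ cᶜ := by
        refine sInf_le ?_
        show b \ e c ≤ e cᶜ
        rw [map_compl' e c, sdiff_eq]
        exact inf_le_right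
      have := le_inf h1 h2
      rw [inf_compl_eq_bot] at this
      exact le_bot_iff.mp this
    intro U hU
    rw [isOpen_iff_forall_mem_open]
    rintro y ⟨x, hxU, rfl⟩
    obtain ⟨b, hxb, hbU⟩ := aux_exists_basic hU hxU
    set c := sInf {a : A0 | b ≤ e a} with hc
    refine ⟨{z : StonePoints A0 | z c = true}, ?_, aux_isOpen_Ob c, ?_⟩
    · -- O_c ⊆ p '' U
      intro z hz
      -- build the filter generated by b and e-images of the z-filter
      have hzproper : ∀ a : A0, z a = true → b ⊓ e a ≠ ⊥ := by
        intro a hza h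
        have hba : b ≤ e aᶜ := by
          rw [map_compl' e a]
          exact le_compl_iff_disjoint_right.mpr (disjoint_iff.mpr h)
        have hca : c ≤ aᶜ := sInf_le hba
        have : z aᶜ = true := aux_hom_mono z hca hz
        rw [aux_hom_compl] at this
        simp [hza] at this
      obtain ⟨x', hx'⟩ := aux_exists_hom_of_filter
        {d : A1 | ∃ a : A0, z a = true ∧ b ⊓ e a ≤ d}
        ⟨⊤, by simp [map_top], le_top⟩
        (by
          rintro d₁ ⟨a₁, hza₁, hd₁⟩ d₂ ⟨a₂, hza₂, hd₂⟩
          refine ⟨a₁ ⊓ a₂, ?_, ?_⟩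
          · rw [map_inf, hza₁, hza₂]; rfl
          · rw [map_inf]
            calc b ⊓ (e a₁ ⊓ e a₂) ≤ (b ⊓ e a₁) ⊓ (b ⊓ e a₂) := by
                  refine le_inf (inf_le_inf_left b inf_le_left) (inf_le_inf_left b inf_le_right)
              _ ≤ d₁ ⊓ d₂ := inf_le_inf hd₁ hd₂)
        (fun d ⟨a, hza, hd⟩ d' hd' => ⟨a, hza, le_trans hd hd'⟩)
        (by
          rintro ⟨a, hza, hd⟩
          exact hzproper a hza (le_bot_iff.mp hd))
      have hx'b : x' b = true := hx' b ⟨⊤, by simp [map_top], by simp⟩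
      have hx'e : ∀ a : A0, z a = true → x' (e a) = true := fun a hza =>
        hx' (e a) ⟨a, hza, inf_le_right⟩
      have hcomp : p x' = z := by
        refine DFunLike.ext _ _ fun a => ?_
        show x' (e a) = z a
        cases hza : z a
        · have h1 : z aᶜ = true := by rw [aux_hom_compl, hza]; rfl
          have h2 : x' (e aᶜ) = true := hx'e aᶜ h1
          rw [map_compl' e a] at h2
          rw [aux_hom_compl] at h2
          simpa using h2
        · exact hx'e a hza
      exact ⟨x', hbU x' hx'b, hcomp⟩
    · -- y = p x ∈ O_c
      show (p x) c = true
      have : x b = true := hxb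
      exact aux_hom_mono x (key b) this
end

section
/- Let A0 and A1 be complete Boolean algebras and e : A0 → A1 an injective bounded lattice homomorphism preserving arbitrary suprema (a complete embedding), with projection h : A1 → A0 given by h(b) = sInf {a ∈ A0 : b ≤ e(a)}. Then for every b ∈ A1, the image under the dual map p : X_{A1} → X_{A0}, p(x) = x ∘ e, of the basic clopen set O_b equals the basic clopen set O_{h(b)}; that is, {x ∘ e : x ∈ X_{A1}, x(b) = true} = {y ∈ X_{A0} : y(h(b)) = true}. -/
/-- For a complete embedding `e : A0 → A1` with projection `h`, the image of the basic
clopen set `O_b` under the dual map is the basic clopen set `O_{h(b)}`. -/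
theorem image_basic_clopen
    {A0 A1 : Type*} [CompleteBooleanAlgebra A0] [CompleteBooleanAlgebra A1]
    (e : BoundedLatticeHom A0 A1) (he : Function.Injective e)
    (he_sSup : ∀ S : Set A0, e (sSup S) = sSup (e '' S))
    (b : A1) :
    (fun x : StonePoints A1 => (BoundedLatticeHom.comp x e : StonePoints A0)) ''
        {x : StonePoints A1 | x b = true} =
      {y : StonePoints A0 | y (sInf {a : A0 | b ≤ e a}) = true} := by
  classical
  set S : Set A0 := {a : A0 | b ≤ e a} with hSdef
  -- `e` preserves `sInf`
  have e_sInf : ∀ T : Set A0, e (sInf T) = sInf (e '' T) := by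
    intro T
    have h1 : sInf T = (sSup (Compl.compl '' T))ᶜ := by
      rw [← compl_sInf', compl_compl]
    rw [h1, map_compl', he_sSup]
    have himg : ⇑e '' (Compl.compl '' T) = Compl.compl '' (⇑e '' T) := by
      rw [Set.image_image, Set.image_image]
      exact Set.image_congr fun a _ => map_compl' e a
    rw [himg, ← compl_sInf', compl_compl]
  have hble : b ≤ e (sInf S) := by
    rw [e_sInf]
    refine le_sInf ?_
    rintro c ⟨a, ha, rfl⟩
    exact ha
  ext y
  simp only [Set.mem_image, Set.mem_setOf_eq]
  constructor
  · rintro ⟨x, hx, rfl⟩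
    have hmono : x b ≤ x (e (sInf S)) := OrderHomClass.mono x hble
    rw [hx] at hmono
    have : x (e (sInf S)) = true := by
      revert hmono; cases x (e (sInf S)) <;> simp
    exact this
  · intro hy
    -- the base filter generated by `b` and the `e a` for `y a = true`
    set F : Set A1 := {c : A1 | ∃ a : A0, y a = true ∧ b ⊓ e a ≤ c} with hFdef
    have y_compl : ∀ a : A0, y aᶜ = !(y a) := by
      intro a
      have h1 : y a ⊓ y aᶜ = ⊥ := by rw [← map_inf, inf_compl_eq_bot, map_bot]
      have h2 : y a ⊔ y aᶜ = ⊤ := by rw [← map_sup, sup_compl_eq_top, map_top]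
      revert h1 h2
      cases hya : y a <;> cases hyac : y (aᶜ) <;> decide
    have hbF : b ∈ F := ⟨⊤, map_top y, by simpa using inf_le_left⟩
    have hbotF : ⊥ ∉ F := by
      rintro ⟨a, hya, hle⟩
      have hdisj : b ⊓ e a = ⊥ := le_bot_iff.mp hle
      have hbc : b ≤ (e a)ᶜ := le_compl_iff_disjoint_right.mpr (disjoint_iff.mpr hdisj)
      have hmem : aᶜ ∈ S := by
        show b ≤ e aᶜ
        rw [map_compl']
        exact hbc
      have h3 : sInf S ≤ aᶜ := sInf_le hmem
      have h4 : y (sInf S) ≤ y aᶜ := OrderHomClass.mono y h3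
      rw [hy, y_compl, hya] at h4
      exact absurd h4 (by decide)
    -- Zorn's lemma: extend F to a maximal proper filter U
    set 𝒮 : Set (Set A1) :=
      {G : Set A1 | F ⊆ G ∧ ⊥ ∉ G ∧ (∀ c ∈ G, ∀ d ∈ G, c ⊓ d ∈ G) ∧
        (∀ c ∈ G, ∀ d : A1, c ≤ d → d ∈ G)} with h𝒮def
    have hF𝒮 : F ∈ 𝒮 := by
      refine ⟨le_refl F, hbotF, ?_, ?_⟩
      · rintro c ⟨a1, ha1, hle1⟩ d ⟨a2, ha2, hle2⟩
        refine ⟨a1 ⊓ a2, ?_, ?_⟩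
        · rw [map_inf, ha1, ha2]; rfl
        · rw [map_inf]
          exact le_inf ((inf_le_inf_left b inf_le_left).trans hle1)
            ((inf_le_inf_left b inf_le_right).trans hle2)
      · rintro c ⟨a, ha, hle⟩ d hcd
        exact ⟨a, ha, hle.trans hcd⟩
    have hzorn : ∀ c ⊆ 𝒮, IsChain (· ⊆ ·) c → c.Nonempty →
        ∃ ub ∈ 𝒮, ∀ s ∈ c, s ⊆ ub := by
      intro c hc𝒮 hchain hcne
      refine ⟨⋃₀ c, ⟨?_, ?_, ?_, ?_⟩, fun s hs => Set.subset_sUnion_of_mem hs⟩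
      · obtain ⟨G, hG⟩ := hcne
        exact (hc𝒮 hG).1.trans (Set.subset_sUnion_of_mem hG)
      · rintro ⟨G, hG, hbot⟩
        exact (hc𝒮 hG).2.1 hbot
      · rintro x ⟨G1, hG1, hx⟩ z ⟨G2, hG2, hz⟩
        rcases hchain.total hG1 hG2 with h12 | h21
        · exact Set.subset_sUnion_of_mem hG2 ((hc𝒮 hG2).2.2.1 x (h12 hx) z hz)
        · exact Set.subset_sUnion_of_mem hG1 ((hc𝒮 hG1).2.2.1 x hx z (h21 hz))
      · rintro x ⟨G, hG, hx⟩ d hxd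
        exact Set.subset_sUnion_of_mem hG ((hc𝒮 hG).2.2.2 x hx d hxd)
    obtain ⟨U, hFU, hUmax⟩ := zorn_subset_nonempty 𝒮 hzorn F hF𝒮
    obtain ⟨hFU', hbotU, hinfU, hupU⟩ := hUmax.prop
    have htopU : ⊤ ∈ U := hupU b (hFU hbF) ⊤ le_top
    -- ultrafilter property
    have hcomplU : ∀ c : A1, c ∉ U → cᶜ ∈ U := by
      intro c hc
      by_contra hcc
      set U' : Set A1 := {d : A1 | ∃ u ∈ U, u ⊓ c ≤ d} with hU'def
      have hUU' : U ⊆ U' := fun u hu => ⟨u, hu, inf_le_left⟩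
      have hU'𝒮 : U' ∈ 𝒮 := by
        refine ⟨hFU'.trans hUU', ?_, ?_, ?_⟩
        · rintro ⟨u, hu, hle⟩
          have : u ≤ cᶜ :=
            le_compl_iff_disjoint_right.mpr (disjoint_iff.mpr (le_bot_iff.mp hle))
          exact hcc (hupU u hu cᶜ this)
        · rintro x ⟨u1, hu1, hle1⟩ z ⟨u2, hu2, hle2⟩
          refine ⟨u1 ⊓ u2, hinfU u1 hu1 u2 hu2, ?_⟩
          exact le_inf ((inf_le_inf_right c inf_le_left).trans hle1)
            ((inf_le_inf_right c inf_le_right).trans hle2)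
        · rintro x ⟨u, hu, hle⟩ d hxd
          exact ⟨u, hu, hle.trans hxd⟩
      have : U' ⊆ U := hUmax.2 hU'𝒮 hUU'
      exact hc (this ⟨⊤, htopU, by simpa using le_refl c⟩)
    have hsupU : ∀ c d : A1, c ⊔ d ∈ U ↔ (c ∈ U ∨ d ∈ U) := by
      intro c d
      constructor
      · intro hcd
        by_contra hn
        push_neg at hn
        have h1 := hcomplU c hn.1
        have h2 := hcomplU d hn.2
        have h3 : cᶜ ⊓ dᶜ ∈ U := hinfU _ h1 _ h2
        have h4 : (c ⊔ d) ⊓ (cᶜ ⊓ dᶜ) ∈ U := hinfU _ hcd _ h3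
        have h5 : (c ⊔ d) ⊓ (cᶜ ⊓ dᶜ) = ⊥ := by
          rw [← compl_sup, inf_compl_eq_bot]
        rw [h5] at h4
        exact hbotU h4
      · rintro (h | h)
        · exact hupU c h _ le_sup_left
        · exact hupU d h _ le_sup_right
    -- construct the point x of the Stone space of A1
    refine ⟨⟨⟨⟨fun c => decide (c ∈ U), ?_⟩, ?_⟩, ?_, ?_⟩, ?_, ?_⟩
    · intro c d
      have hi : c ⊔ d ∈ U ↔ (c ∈ U ∨ d ∈ U) := hsupU c d
      by_cases hc : c ∈ U <;> by_cases hd : d ∈ U <;>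
        simp [hi, hc, hd]
    · intro c d
      have hi : c ⊓ d ∈ U ↔ (c ∈ U ∧ d ∈ U) :=
        ⟨fun h => ⟨hupU _ h _ inf_le_left, hupU _ h _ inf_le_right⟩,
          fun h => hinfU _ h.1 _ h.2⟩
      by_cases hc : c ∈ U <;> by_cases hd : d ∈ U <;>
        simp [hi, hc, hd]
    · simpa using htopU
    · simpa using hbotU
    · simpa using hFU hbF
    · -- the composite equals y
      ext a
      show decide (e a ∈ U) = y a
      have hiff : e a ∈ U ↔ y a = true := by
        constructor
        · intro hea
          by_contra hya
          have hya' : y a = false := by revert hya; cases y a <;> simp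
          have h1 : y aᶜ = true := by rw [y_compl, hya']; rfl
          have h2 : e aᶜ ∈ U := hFU (⟨aᶜ, h1, inf_le_right⟩ : e aᶜ ∈ F)
          have h3 : e a ⊓ e aᶜ ∈ U := hinfU _ hea _ h2
          rw [← map_inf, inf_compl_eq_bot, map_bot] at h3
          exact hbotU h3
        · intro hya
          exact hFU ⟨a, hya, inf_le_right⟩
      cases hya : y a
      · simp only [decide_eq_false_iff_not]
        rw [hiff, hya]; simp
      · simp only [decide_eq_true_eq]
        exact hiff.mpr hya
end

section
/- In the topological amalgamated limit setting, if F ⊆ G ⊆ I are finite closed subsets of I and x ∈ Y_F, then there exists y ∈ Y_G with y(j) = x(j) for all j ∈ F. -/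
section TopAmal

variable {I : Type*} [PartialOrder I]
variable (X : I → Type*) (p : ∀ i j : I, i ≤ j → X j → X i)

/-- Membership in the topological amalgamated limit `X_ℓ ⊆ Π_{i∈I} X_i`. -/
def InXl (x : ∀ i, X i) : Prop :=
  ∀ i j : I, ∀ hij : i ≤ j, p i j hij (x j) = x i

/-- Membership in `Y_F`: threads indexed by a subset `F ⊆ I`. -/
def InY (F : Set I) (y : ∀ i, X i) : Prop :=
  ∀ k ∈ F, ∀ j ∈ F, ∀ h : k ≤ j, p k j h (y j) = y k

end TopAmal

/-- Any thread over a finite closed `F ⊆ I` extends to a thread over any larger finite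
closed `G ⊆ I`. -/
theorem thread_extends_finite_closed
    {I : Type*} [PartialOrder I] (L : DistribAlmostLattice I)
    (X : I → Type*) [∀ i, TopologicalSpace (X i)]
    [∀ i, Nonempty (X i)] [∀ i, CompactSpace (X i)] [∀ i, T2Space (X i)]
    (p : ∀ i j : I, i ≤ j → X j → X i)
    (hcont : ∀ i j : I, ∀ hij : i ≤ j, Continuous (p i j hij))
    (hopen : ∀ i j : I, ∀ hij : i ≤ j, IsOpenMap (p i j hij))
    (hsurj : ∀ i j : I, ∀ hij : i ≤ j, Function.Surjective (p i j hij))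
    (hid : ∀ i : I, ∀ hii : i ≤ i, ∀ x : X i, p i i hii x = x)
    (hcomp : ∀ i j k : I, ∀ hij : i ≤ j, ∀ hjk : j ≤ k, ∀ x : X k,
      p i j hij (p j k hjk x) = p i k (hij.trans hjk) x)
    (hcor : ∀ i j : I, ∀ hub : ∃ u, i ≤ u ∧ j ≤ u, ∀ xi : X i, ∀ xj : X j,
      p (L.meet i j) i (L.meet_le_left i j) xi =
        p (L.meet i j) j (L.meet_le_right i j) xj →
      ∃ z : X (L.join i j),
        p i (L.join i j) (L.le_join_left i j hub) z = xi ∧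
        p j (L.join i j) (L.le_join_right i j hub) z = xj)
    (F G : Set I) (hF : F.Finite) (hG : G.Finite) (hFG : F ⊆ G)
    (hFcl : IsClosedSubset L F) (hGcl : IsClosedSubset L G)
    (x : ∀ i, X i) (hx : InY X p F x) :
    ∃ y : ∀ i, X i, InY X p G y ∧ ∀ j ∈ F, y j = x j := by
  classical
  -- basic order helpers
  have le_meet : ∀ {k i j : I}, k ≤ i → k ≤ j → k ≤ L.meet i j := by
    intro k i j h1 h2
    refine (L.meet_isGLB i j).2 fun a ha => ?_
    simp only [Set.mem_insert_iff, Set.mem_singleton_iff] at ha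
    rcases ha with rfl | rfl
    · exact h1
    · exact h2
  have join_le : ∀ {i j k : I}, (∃ u, i ≤ u ∧ j ≤ u) → i ≤ k → j ≤ k → L.join i j ≤ k := by
    intro i j k hub h1 h2
    refine (L.join_isLUB i j hub).2 fun a ha => ?_
    simp only [Set.mem_insert_iff, Set.mem_singleton_iff] at ha
    rcases ha with rfl | rfl
    · exact h1
    · exact h2
  have exists_top : ∀ (S : Set I), S.Finite → S.Nonempty → ∀ (B : I), (∀ s ∈ S, s ≤ B) →
      (∀ s ∈ S, ∀ t ∈ S, L.join s t ∈ S) → ∃ m ∈ S, ∀ s ∈ S, s ≤ m := by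
    intro S hfin hne B hbd hjoin
    obtain ⟨m, hm, hmax⟩ : ∃ m ∈ S, ∀ a ∈ S, id m ≤ id a → id m = id a := by
      obtain ⟨m, hm⟩ := hfin.exists_maximal hne
      exact ⟨m, hm.1, fun a ha h => le_antisymm h (hm.2 ha h)⟩
    refine ⟨m, hm, fun s hs => ?_⟩
    have hub : ∃ u, m ≤ u ∧ s ≤ u := ⟨B, hbd m hm, hbd s hs⟩
    have h2 : m = L.join m s := hmax _ (hjoin m hm s hs) (L.le_join_left m s hub)
    have h3 := L.le_join_right m s hub
    rw [← h2] at h3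
    exact h3
  have block : ∀ (B : I) (S : Set I), S.Finite → (∀ s ∈ S, s ≤ B) →
      (∀ s ∈ S, ∀ t ∈ S, L.join s t ∈ S) → S ⊆ F →
      ∃ Z : X B, ∀ s, s ∈ S → ∀ h : s ≤ B, p s B h Z = x s := by
    intro B S hSfin hSbd hSj hSF
    by_cases hSne : S.Nonempty
    · obtain ⟨t, htS, htop⟩ := exists_top S hSfin hSne B hSbd hSj
      obtain ⟨Z, hZ⟩ := hsurj t B (hSbd t htS) (x t)
      refine ⟨Z, fun s hs h => ?_⟩
      have e1 : p s t (htop s hs) (p t B (hSbd t htS) Z) = p s B h Z :=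
        hcomp s t B (htop s hs) (hSbd t htS) Z
      rw [← e1, hZ]
      exact hx s (hSF hs) t (hSF htS) (htop s hs)
    · exact ⟨Classical.arbitrary _, fun s hs _ => absurd ⟨s, hs⟩ hSne⟩
  by_cases hGne : G.Nonempty
  swap
  · refine ⟨fun i => Classical.arbitrary _, ?_, ?_⟩
    · intro k hk
      exact (hGne ⟨k, hk⟩).elim
    · intro j hj
      exact (hGne ⟨j, hFG hj⟩).elim
  obtain ⟨M₁, hM₁G, hM₁max⟩ : ∃ m ∈ G, ∀ a ∈ G, id m ≤ id a → id m = id a := by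
    obtain ⟨m, hm⟩ := hG.exists_maximal hGne
    exact ⟨m, hm.1, fun a ha h => le_antisymm h (hm.2 ha h)⟩
  have not_ub : ∀ M M', M ∈ G → M' ∈ G → (∀ g ∈ G, M ≤ g → M = g) → ¬ M' ≤ M →
      ¬ ∃ u, M ≤ u ∧ M' ≤ u := by
    rintro M M' hM hM' hmax hnle ⟨u, hu1, hu2⟩
    have hub : ∃ u, M ≤ u ∧ M' ≤ u := ⟨u, hu1, hu2⟩
    have hj : L.join M M' ∈ G := (hGcl M hM M' hM').2 hub
    have h1 : M = L.join M M' := hmax _ hj (L.le_join_left _ _ hub)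
    refine hnle ?_
    rw [h1]
    exact L.le_join_right M M' hub
  by_cases hdir : ∀ g ∈ G, g ≤ M₁
  · -- directed case
    obtain ⟨Z, hZ⟩ := block M₁ F hF (fun f hf => hdir f (hFG hf))
      (fun s hs t ht => (hFcl s hs t ht).2 ⟨M₁, hdir s (hFG hs), hdir t (hFG ht)⟩)
      (fun a ha => ha)
    refine ⟨fun i => if h : i ≤ M₁ then p i M₁ h Z else Classical.arbitrary _, ?_, ?_⟩
    · intro k hk j hj hkj
      have hkM : k ≤ M₁ := hdir k hk
      have hjM : j ≤ M₁ := hdir j hj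
      simp only [dif_pos hkM, dif_pos hjM]
      exact hcomp k j M₁ hkj hjM Z
    · intro f hf
      have hfM : f ≤ M₁ := hdir f (hFG hf)
      simp only [dif_pos hfM]
      exact hZ f hf hfM
  · -- two maximal elements
    push_neg at hdir
    obtain ⟨g₀, hg₀G, hg₀n⟩ := hdir
    have above : ∀ g ∈ G, ∃ M, M ∈ G ∧ g ≤ M ∧ ∀ g' ∈ G, M ≤ g' → M = g' := by
      intro g hg
      have hfin : {g' | g' ∈ G ∧ g ≤ g'}.Finite := hG.subset fun a ha => ha.1
      obtain ⟨M, hM, hMmax⟩ : ∃ m ∈ {g' | g' ∈ G ∧ g ≤ g'}, ∀ a ∈ {g' | g' ∈ G ∧ g ≤ g'}, id m ≤ id a → id m = id a := by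
        obtain ⟨m, hm⟩ := hfin.exists_maximal ⟨g, hg, le_refl g⟩
        exact ⟨m, hm.1, fun a ha h => le_antisymm h (hm.2 ha h)⟩
      refine ⟨M, hM.1, hM.2, fun g' hg' hle => ?_⟩
      exact hMmax g' ⟨hg', hM.2.trans hle⟩ hle
    obtain ⟨M₂, hM₂G, hg₀M₂, hM₂max⟩ := above g₀ hg₀G
    have hM₂nle : ¬ M₂ ≤ M₁ := fun h => hg₀n (hg₀M₂.trans h)
    have cover : ∀ g ∈ G, g ≤ M₁ ∨ g ≤ M₂ := by
      intro g hg
      by_contra hc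
      push_neg at hc
      obtain ⟨M₃, hM₃G, hgM₃, hM₃max⟩ := above g hg
      have h31 : ¬ M₃ ≤ M₁ := fun h => hc.1 (hgM₃.trans h)
      have h32 : ¬ M₃ ≤ M₂ := fun h => hc.2 (hgM₃.trans h)
      rcases L.two_of_three M₁ M₂ M₃ with h | h | h
      · exact not_ub M₁ M₂ hM₁G hM₂G hM₁max hM₂nle h
      · exact not_ub M₁ M₃ hM₁G hM₃G hM₁max h31 h
      · exact not_ub M₂ M₃ hM₂G hM₃G hM₂max h32 h
    have hDM₁ : L.meet M₁ M₂ ≤ M₁ := L.meet_le_left M₁ M₂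
    have hDM₂ : L.meet M₁ M₂ ≤ M₂ := L.meet_le_right M₁ M₂
    -- gluing two block values into a thread
    have glue : ∀ (Z₁ : X M₁) (Z₂ : X M₂),
        p (L.meet M₁ M₂) M₁ hDM₁ Z₁ = p (L.meet M₁ M₂) M₂ hDM₂ Z₂ →
        (∀ f, f ∈ F → ∀ h : f ≤ M₁, p f M₁ h Z₁ = x f) →
        (∀ f, f ∈ F → ¬ f ≤ M₁ → ∀ h : f ≤ M₂, p f M₂ h Z₂ = x f) →
        ∃ y : ∀ i, X i, InY X p G y ∧ ∀ j ∈ F, y j = x j := by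
      intro Z₁ Z₂ hD hc2 hc3
      refine ⟨fun i => if h : i ≤ M₁ then p i M₁ h Z₁ else
          if h2 : i ≤ M₂ then p i M₂ h2 Z₂ else Classical.arbitrary _, ?_, ?_⟩
      · intro k hk j hj hkj
        by_cases hjM₁ : j ≤ M₁
        · have hkM₁ : k ≤ M₁ := hkj.trans hjM₁
          simp only [dif_pos hjM₁, dif_pos hkM₁]
          exact hcomp k j M₁ hkj hjM₁ Z₁
        · have hjM₂ : j ≤ M₂ := (cover j hj).resolve_left hjM₁
          by_cases hkM₁ : k ≤ M₁
          · have hkM₂ : k ≤ M₂ := hkj.trans hjM₂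
            have hkD : k ≤ L.meet M₁ M₂ := le_meet hkM₁ hkM₂
            simp only [dif_neg hjM₁, dif_pos hjM₂, dif_pos hkM₁]
            calc p k j hkj (p j M₂ hjM₂ Z₂)
                = p k M₂ (hkj.trans hjM₂) Z₂ := hcomp k j M₂ hkj hjM₂ Z₂
              _ = p k (L.meet M₁ M₂) hkD (p (L.meet M₁ M₂) M₂ hDM₂ Z₂) :=
                  (hcomp k (L.meet M₁ M₂) M₂ hkD hDM₂ Z₂).symm
              _ = p k (L.meet M₁ M₂) hkD (p (L.meet M₁ M₂) M₁ hDM₁ Z₁) := by rw [hD]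
              _ = p k M₁ hkM₁ Z₁ := hcomp k (L.meet M₁ M₂) M₁ hkD hDM₁ Z₁
          · have hkM₂ : k ≤ M₂ := (cover k hk).resolve_left hkM₁
            simp only [dif_neg hjM₁, dif_pos hjM₂, dif_neg hkM₁, dif_pos hkM₂]
            exact hcomp k j M₂ hkj hjM₂ Z₂
      · intro f hf
        by_cases hfM₁ : f ≤ M₁
        · simp only [dif_pos hfM₁]
          exact hc2 f hf hfM₁
        · have hfM₂ : f ≤ M₂ := (cover f (hFG hf)).resolve_left hfM₁
          simp only [dif_neg hfM₁, dif_pos hfM₂]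
          exact hc3 f hf hfM₁ hfM₂
    set F₂ : Set I := {f | f ∈ F ∧ ¬ f ≤ M₁} with hF₂def
    by_cases hF₂ : F₂.Nonempty
    · -- there are F-elements only below M₂
      have hF₂fin : F₂.Finite := hF.subset fun a ha => ha.1
      have hF₂bd : ∀ f ∈ F₂, f ≤ M₂ := fun f hf => (cover f (hFG hf.1)).resolve_left hf.2
      have hF₂j : ∀ s ∈ F₂, ∀ t ∈ F₂, L.join s t ∈ F₂ := by
        intro s hs t ht
        have hub : ∃ u, s ≤ u ∧ t ≤ u := ⟨M₂, hF₂bd s hs, hF₂bd t ht⟩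
        exact ⟨(hFcl s hs.1 t ht.1).2 hub, fun h => hs.2 ((L.le_join_left s t hub).trans h)⟩
      obtain ⟨f₂, hf₂F₂, hf₂top⟩ := exists_top F₂ hF₂fin hF₂ M₂ hF₂bd hF₂j
      have hf₂F : f₂ ∈ F := hf₂F₂.1
      have hf₂M₂ : f₂ ≤ M₂ := hF₂bd f₂ hf₂F₂
      by_cases hF₁ : ({f | f ∈ F ∧ f ≤ M₁} : Set I).Nonempty
      · -- both blocks meet F : the correctness case
        have hF₁fin : ({f | f ∈ F ∧ f ≤ M₁} : Set I).Finite := hF.subset fun a ha => ha.1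
        have hF₁j : ∀ s ∈ ({f | f ∈ F ∧ f ≤ M₁} : Set I), ∀ t ∈ ({f | f ∈ F ∧ f ≤ M₁} : Set I),
            L.join s t ∈ ({f | f ∈ F ∧ f ≤ M₁} : Set I) := by
          intro s hs t ht
          have hub : ∃ u, s ≤ u ∧ t ≤ u := ⟨M₁, hs.2, ht.2⟩
          exact ⟨(hFcl s hs.1 t ht.1).2 hub, join_le hub hs.2 ht.2⟩
        obtain ⟨f₁, hf₁F₁, hf₁top'⟩ := exists_top _ hF₁fin hF₁ M₁ (fun f hf => hf.2) hF₁j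
        have hf₁F : f₁ ∈ F := hf₁F₁.1
        have hf₁M₁ : f₁ ≤ M₁ := hf₁F₁.2
        have hf₁top : ∀ f ∈ F, f ≤ M₁ → f ≤ f₁ := fun f hf h => hf₁top' f ⟨hf, h⟩
        -- h' := M₁ ∧ f₂
        have hh'M₁ : L.meet M₁ f₂ ≤ M₁ := L.meet_le_left M₁ f₂
        have hh'f₂ : L.meet M₁ f₂ ≤ f₂ := L.meet_le_right M₁ f₂
        have hubJ₁ : ∃ u, f₁ ≤ u ∧ L.meet M₁ f₂ ≤ u := ⟨M₁, hf₁M₁, hh'M₁⟩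
        have hgF : L.meet f₁ f₂ ∈ F := (hFcl f₁ hf₁F f₂ hf₂F).1
        have hgf₁ : L.meet f₁ f₂ ≤ f₁ := L.meet_le_left f₁ f₂
        have hgf₂ : L.meet f₁ f₂ ≤ f₂ := L.meet_le_right f₁ f₂
        have compat1 : p (L.meet f₁ (L.meet M₁ f₂)) f₁ (L.meet_le_left f₁ (L.meet M₁ f₂)) (x f₁) =
            p (L.meet f₁ (L.meet M₁ f₂)) (L.meet M₁ f₂) (L.meet_le_right f₁ (L.meet M₁ f₂))
              (p (L.meet M₁ f₂) f₂ hh'f₂ (x f₂)) := by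
          have ht1 : L.meet f₁ (L.meet M₁ f₂) ≤ f₁ := L.meet_le_left f₁ (L.meet M₁ f₂)
          have ht2 : L.meet f₁ (L.meet M₁ f₂) ≤ L.meet M₁ f₂ := L.meet_le_right f₁ (L.meet M₁ f₂)
          have htg : L.meet f₁ (L.meet M₁ f₂) ≤ L.meet f₁ f₂ := le_meet ht1 (ht2.trans hh'f₂)
          calc p (L.meet f₁ (L.meet M₁ f₂)) f₁ ht1 (x f₁)
              = p (L.meet f₁ (L.meet M₁ f₂)) (L.meet f₁ f₂) htg (p (L.meet f₁ f₂) f₁ hgf₁ (x f₁)) :=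
                (hcomp _ (L.meet f₁ f₂) f₁ htg hgf₁ (x f₁)).symm
            _ = p (L.meet f₁ (L.meet M₁ f₂)) (L.meet f₁ f₂) htg (p (L.meet f₁ f₂) f₂ hgf₂ (x f₂)) := by
                rw [hx _ hgF f₁ hf₁F hgf₁, hx _ hgF f₂ hf₂F hgf₂]
            _ = p (L.meet f₁ (L.meet M₁ f₂)) f₂ (htg.trans hgf₂) (x f₂) :=
                hcomp _ (L.meet f₁ f₂) f₂ htg hgf₂ (x f₂)
            _ = p (L.meet f₁ (L.meet M₁ f₂)) (L.meet M₁ f₂) ht2 (p (L.meet M₁ f₂) f₂ hh'f₂ (x f₂)) :=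
                (hcomp _ (L.meet M₁ f₂) f₂ ht2 hh'f₂ (x f₂)).symm
        obtain ⟨V₁, hV₁a, hV₁b⟩ := hcor f₁ (L.meet M₁ f₂) hubJ₁ (x f₁)
          (p (L.meet M₁ f₂) f₂ hh'f₂ (x f₂)) compat1
        have hJ₁M₁ : L.join f₁ (L.meet M₁ f₂) ≤ M₁ := join_le hubJ₁ hf₁M₁ hh'M₁
        obtain ⟨Z₁, hZ₁⟩ := hsurj (L.join f₁ (L.meet M₁ f₂)) M₁ hJ₁M₁ V₁
        have hc2 : ∀ f, f ∈ F → ∀ h : f ≤ M₁, p f M₁ h Z₁ = x f := by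
          intro f hf h
          have hff₁ : f ≤ f₁ := hf₁top f hf h
          have hfJ₁ : f ≤ L.join f₁ (L.meet M₁ f₂) := hff₁.trans (L.le_join_left _ _ hubJ₁)
          calc p f M₁ h Z₁
              = p f (L.join f₁ (L.meet M₁ f₂)) hfJ₁ (p (L.join f₁ (L.meet M₁ f₂)) M₁ hJ₁M₁ Z₁) :=
                (hcomp f _ M₁ hfJ₁ hJ₁M₁ Z₁).symm
            _ = p f (L.join f₁ (L.meet M₁ f₂)) hfJ₁ V₁ := by rw [hZ₁]
            _ = p f f₁ hff₁ (p f₁ (L.join f₁ (L.meet M₁ f₂)) (L.le_join_left f₁ (L.meet M₁ f₂) hubJ₁) V₁) :=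
                (hcomp f f₁ _ hff₁ (L.le_join_left f₁ (L.meet M₁ f₂) hubJ₁) V₁).symm
            _ = p f f₁ hff₁ (x f₁) := by rw [hV₁a]
            _ = x f := hx f hf f₁ hf₁F hff₁
        -- projection of Z₁ to M₁ ∧ f₂ is the canonical value
        have hh'J₁ : L.meet M₁ f₂ ≤ L.join f₁ (L.meet M₁ f₂) := L.le_join_right _ _ hubJ₁
        have hZ₁h' : p (L.meet M₁ f₂) M₁ hh'M₁ Z₁ = p (L.meet M₁ f₂) f₂ hh'f₂ (x f₂) := by
          calc p (L.meet M₁ f₂) M₁ hh'M₁ Z₁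
              = p (L.meet M₁ f₂) (L.join f₁ (L.meet M₁ f₂)) hh'J₁
                  (p (L.join f₁ (L.meet M₁ f₂)) M₁ hJ₁M₁ Z₁) :=
                (hcomp _ _ M₁ hh'J₁ hJ₁M₁ Z₁).symm
            _ = p (L.meet M₁ f₂) (L.join f₁ (L.meet M₁ f₂)) hh'J₁ V₁ := by rw [hZ₁]
            _ = p (L.meet M₁ f₂) f₂ hh'f₂ (x f₂) := hV₁b
        -- correctness at (D, f₂)
        have hubJ₂ : ∃ u, L.meet M₁ M₂ ≤ u ∧ f₂ ≤ u := ⟨M₂, hDM₂, hf₂M₂⟩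
        have compat2 : p (L.meet (L.meet M₁ M₂) f₂) (L.meet M₁ M₂)
              (L.meet_le_left (L.meet M₁ M₂) f₂) (p (L.meet M₁ M₂) M₁ hDM₁ Z₁) =
            p (L.meet (L.meet M₁ M₂) f₂) f₂ (L.meet_le_right (L.meet M₁ M₂) f₂) (x f₂) := by
          have ht1 : L.meet (L.meet M₁ M₂) f₂ ≤ L.meet M₁ M₂ := L.meet_le_left _ f₂
          have ht2 : L.meet (L.meet M₁ M₂) f₂ ≤ f₂ := L.meet_le_right _ f₂
          have hth' : L.meet (L.meet M₁ M₂) f₂ ≤ L.meet M₁ f₂ := le_meet (ht1.trans hDM₁) ht2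
          calc p (L.meet (L.meet M₁ M₂) f₂) (L.meet M₁ M₂) ht1 (p (L.meet M₁ M₂) M₁ hDM₁ Z₁)
              = p (L.meet (L.meet M₁ M₂) f₂) M₁ (ht1.trans hDM₁) Z₁ :=
                hcomp _ (L.meet M₁ M₂) M₁ ht1 hDM₁ Z₁
            _ = p (L.meet (L.meet M₁ M₂) f₂) (L.meet M₁ f₂) hth'
                  (p (L.meet M₁ f₂) M₁ hh'M₁ Z₁) :=
                (hcomp _ (L.meet M₁ f₂) M₁ hth' hh'M₁ Z₁).symm
            _ = p (L.meet (L.meet M₁ M₂) f₂) (L.meet M₁ f₂) hth'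
                  (p (L.meet M₁ f₂) f₂ hh'f₂ (x f₂)) := by rw [hZ₁h']
            _ = p (L.meet (L.meet M₁ M₂) f₂) f₂ (hth'.trans hh'f₂) (x f₂) :=
                hcomp _ (L.meet M₁ f₂) f₂ hth' hh'f₂ (x f₂)
        obtain ⟨V₂, hV₂a, hV₂b⟩ := hcor (L.meet M₁ M₂) f₂ hubJ₂
          (p (L.meet M₁ M₂) M₁ hDM₁ Z₁) (x f₂) compat2
        have hJ₂M₂ : L.join (L.meet M₁ M₂) f₂ ≤ M₂ := join_le hubJ₂ hDM₂ hf₂M₂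
        obtain ⟨Z₂, hZ₂⟩ := hsurj (L.join (L.meet M₁ M₂) f₂) M₂ hJ₂M₂ V₂
        have hc1 : p (L.meet M₁ M₂) M₁ hDM₁ Z₁ = p (L.meet M₁ M₂) M₂ hDM₂ Z₂ := by
          have hDJ₂ : L.meet M₁ M₂ ≤ L.join (L.meet M₁ M₂) f₂ := L.le_join_left _ _ hubJ₂
          calc p (L.meet M₁ M₂) M₁ hDM₁ Z₁
              = p (L.meet M₁ M₂) (L.join (L.meet M₁ M₂) f₂) hDJ₂ V₂ := hV₂a.symm
            _ = p (L.meet M₁ M₂) (L.join (L.meet M₁ M₂) f₂) hDJ₂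
                  (p (L.join (L.meet M₁ M₂) f₂) M₂ hJ₂M₂ Z₂) := by rw [hZ₂]
            _ = p (L.meet M₁ M₂) M₂ (hDJ₂.trans hJ₂M₂) Z₂ :=
                hcomp _ (L.join (L.meet M₁ M₂) f₂) M₂ hDJ₂ hJ₂M₂ Z₂
        have hc3 : ∀ f, f ∈ F → ¬ f ≤ M₁ → ∀ h : f ≤ M₂, p f M₂ h Z₂ = x f := by
          intro f hf hn h
          have hff₂ : f ≤ f₂ := hf₂top f ⟨hf, hn⟩
          have hf₂J₂ : f₂ ≤ L.join (L.meet M₁ M₂) f₂ := L.le_join_right _ _ hubJ₂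
          have hfJ₂ : f ≤ L.join (L.meet M₁ M₂) f₂ := hff₂.trans hf₂J₂
          calc p f M₂ h Z₂
              = p f (L.join (L.meet M₁ M₂) f₂) hfJ₂ (p (L.join (L.meet M₁ M₂) f₂) M₂ hJ₂M₂ Z₂) :=
                (hcomp f _ M₂ hfJ₂ hJ₂M₂ Z₂).symm
            _ = p f (L.join (L.meet M₁ M₂) f₂) hfJ₂ V₂ := by rw [hZ₂]
            _ = p f f₂ hff₂ (p f₂ (L.join (L.meet M₁ M₂) f₂) hf₂J₂ V₂) :=
                (hcomp f f₂ _ hff₂ hf₂J₂ V₂).symm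
            _ = p f f₂ hff₂ (x f₂) := by rw [hV₂b]
            _ = x f := hx f hf f₂ hf₂F hff₂
        exact glue Z₁ Z₂ hc1 hc2 hc3
      · -- F entirely below M₂
        have hFM₂ : ∀ f ∈ F, ¬ f ≤ M₁ := by
          intro f hf h
          exact hF₁ ⟨f, hf, h⟩
        obtain ⟨Z₂, hZ₂⟩ := block M₂ F hF (fun f hf => (cover f (hFG hf)).resolve_left (hFM₂ f hf))
          (fun s hs t ht => (hFcl s hs t ht).2
            ⟨M₂, (cover s (hFG hs)).resolve_left (hFM₂ s hs),
              (cover t (hFG ht)).resolve_left (hFM₂ t ht)⟩)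
          (fun a ha => ha)
        obtain ⟨Z₁, hZ₁⟩ := hsurj (L.meet M₁ M₂) M₁ hDM₁ (p (L.meet M₁ M₂) M₂ hDM₂ Z₂)
        refine glue Z₁ Z₂ hZ₁ ?_ ?_
        · intro f hf h
          exact absurd h (hFM₂ f hf)
        · intro f hf hn h
          exact hZ₂ f hf h
    · -- F entirely below M₁
      have hFM₁ : ∀ f ∈ F, f ≤ M₁ := by
        intro f hf
        by_contra h
        exact hF₂ ⟨f, hf, h⟩
      obtain ⟨Z₁, hZ₁⟩ := block M₁ F hF hFM₁
        (fun s hs t ht => (hFcl s hs t ht).2 ⟨M₁, hFM₁ s hs, hFM₁ t ht⟩)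
        (fun a ha => ha)
      obtain ⟨Z₂, hZ₂⟩ := hsurj (L.meet M₁ M₂) M₂ hDM₂ (p (L.meet M₁ M₂) M₁ hDM₁ Z₁)
      refine glue Z₁ Z₂ hZ₂.symm ?_ ?_
      · intro f hf h
        exact hZ₁ f hf h
      · intro f hf hn h
        exact absurd (hFM₁ f hf) hn
end
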